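/- arXiv:1503.00887 — 10 statements merged into one kernel-verified Lean document; each statement's English description precedes it below -/
import Mathlib

section
/- For every y ∈ H, the family i ↦ λ_i·⟨y, φ_i⟩·φ_i is summable in H, and f has Fréchet gradient at y equal to ∇f(y) = Σ_i λ_i·⟨y, φ_i⟩·φ_i. -/
open RealInnerProductSpace

section Aux

variable {H : Type*} [NormedAddCommGroup H] [InnerProductSpace ℝ H]
    [CompleteSpace H] {ι : Type*} (φ : HilbertBasis ι ℝ H)

lemma aux_sq_summable (z : H) : Summable (fun i => (⟪z, φ i⟫ : ℝ) ^ 2) := by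
  have := φ.summable_inner_mul_inner z z
  refine this.congr fun i => ?_
  rw [real_inner_comm (φ i) z, sq]

lemma aux_parseval (z : H) : ∑' i, (⟪z, φ i⟫ : ℝ) ^ 2 = ‖z‖ ^ 2 := by
  have h := φ.tsum_inner_mul_inner z z
  rw [real_inner_self_eq_norm_sq] at h
  rw [← h]
  refine tsum_congr fun i => ?_
  rw [real_inner_comm (φ i) z, sq]

end Aux

/-- For every `y`, the family `i ↦ λ i • ⟪y, φ i⟫ • φ i` is summable in `H`, and
`f(x) = Σ_i (λ i / 2) ⟪x, φ i⟫²` has Fréchet gradient at `y` equal to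
`∇f(y) = Σ_i λ i • ⟪y, φ i⟫ • φ i`. -/
theorem f_gradient {H : Type*} [NormedAddCommGroup H] [InnerProductSpace ℝ H]
    [CompleteSpace H] {ι : Type*} (φ : HilbertBasis ι ℝ H)
    (σ β : ℝ) (hσ : 0 < σ) (hσβ : σ ≤ β) (lam : ι → ℝ)
    (hlam : ∀ i, σ ≤ lam i ∧ lam i ≤ β) (y : H) :
    Summable (fun i => lam i • (⟪y, φ i⟫ : ℝ) • φ i) ∧
    HasGradientAt (fun x : H => ∑' i, lam i / 2 * ⟪x, φ i⟫ ^ 2)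
      (∑' i, lam i • (⟪y, φ i⟫ : ℝ) • φ i) y := by
  have hβ : 0 < β := lt_of_lt_of_le hσ hσβ
  -- the coefficient function is in ℓ²
  have hmem : Memℓp (fun i => lam i * (⟪y, φ i⟫ : ℝ)) 2 := by
    apply memℓp_gen
    have h2 : (2 : ENNReal).toReal = ((2 : ℕ) : ℝ) := by norm_num
    have hsum : Summable (fun i => β ^ 2 * (⟪y, φ i⟫ : ℝ) ^ 2) :=
      (aux_sq_summable φ y).mul_left _
    refine Summable.of_nonneg_of_le (fun i => ?_) (fun i => ?_) hsum
    · positivity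
    · rw [h2, Real.rpow_natCast]
      have h1 := (hlam i).1
      have h2 := (hlam i).2
      have : ‖lam i * (⟪y, φ i⟫ : ℝ)‖ ^ 2 = (lam i) ^ 2 * (⟪y, φ i⟫ : ℝ) ^ 2 := by
        rw [norm_mul, mul_pow, Real.norm_eq_abs, Real.norm_eq_abs, sq_abs, sq_abs]
      rw [this]
      have : (lam i) ^ 2 ≤ β ^ 2 := by nlinarith
      nlinarith [sq_nonneg (⟪y, φ i⟫ : ℝ)]
  set c : lp (fun _ : ι => ℝ) 2 := ⟨fun i => lam i * (⟪y, φ i⟫ : ℝ), hmem⟩ with hc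
  have hcoe : ∀ i, c i = lam i * (⟪y, φ i⟫ : ℝ) := fun i => rfl
  have hg : HasSum (fun i => lam i • (⟪y, φ i⟫ : ℝ) • φ i) (φ.repr.symm c) := by
    have := φ.hasSum_repr_symm c
    refine this.congr_fun fun i => ?_
    rw [hcoe, smul_smul]
  have hsummable : Summable (fun i => lam i • (⟪y, φ i⟫ : ℝ) • φ i) := hg.summable
  refine ⟨hsummable, ?_⟩
  have hgeq : (∑' i, lam i • (⟪y, φ i⟫ : ℝ) • φ i) = φ.repr.symm c := hg.tsum_eq
  rw [hgeq]
  set g : H := φ.repr.symm c with hgdef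
  -- summability of the f-series for any point
  have hfs : ∀ z : H, Summable (fun i => lam i / 2 * (⟪z, φ i⟫ : ℝ) ^ 2) := by
    intro z
    refine Summable.of_nonneg_of_le (fun i => ?_) (fun i => ?_)
      ((aux_sq_summable φ z).mul_left (β / 2))
    · have h1 := (hlam i).1
      have : (0:ℝ) ≤ lam i / 2 := by linarith
      exact mul_nonneg this (sq_nonneg _)
    · have := (hlam i).2
      nlinarith [sq_nonneg (⟪z, φ i⟫ : ℝ)]
  -- inner product with g
  have hinner : ∀ z : H, (⟪g, z⟫ : ℝ) = ∑' i, lam i * (⟪y, φ i⟫ : ℝ) * (⟪z, φ i⟫ : ℝ) := by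
    intro z
    have h1 : HasSum (fun i => (⟪z, lam i • (⟪y, φ i⟫ : ℝ) • φ i⟫ : ℝ)) ⟪z, g⟫ :=
      hg.mapL (innerSL ℝ z)
    have h2 : HasSum (fun i => lam i * (⟪y, φ i⟫ : ℝ) * (⟪z, φ i⟫ : ℝ)) ⟪z, g⟫ := by
      refine h1.congr_fun fun i => ?_
      rw [real_inner_smul_right, real_inner_smul_right]; ring
    rw [real_inner_comm, h2.tsum_eq]
  have hinnersum : ∀ z : H, Summable (fun i => lam i * (⟪y, φ i⟫ : ℝ) * (⟪z, φ i⟫ : ℝ)) := by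
    intro z
    have h1 : HasSum (fun i => (⟪z, lam i • (⟪y, φ i⟫ : ℝ) • φ i⟫ : ℝ)) ⟪z, g⟫ :=
      hg.mapL (innerSL ℝ z)
    refine (h1.congr_fun fun i => ?_).summable
    rw [real_inner_smul_right, real_inner_smul_right]; ring
  -- key identity and bound
  have hkey : ∀ x : H,
      (∑' i, lam i / 2 * (⟪x, φ i⟫ : ℝ) ^ 2) - (∑' i, lam i / 2 * (⟪y, φ i⟫ : ℝ) ^ 2)
        - ⟪g, x - y⟫ = ∑' i, lam i / 2 * (⟪x - y, φ i⟫ : ℝ) ^ 2 := by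
    intro x
    rw [hinner (x - y), ← Summable.tsum_sub (hfs x) (hfs y),
      ← Summable.tsum_sub ((hfs x).sub (hfs y)) (hinnersum (x - y))]
    refine tsum_congr fun i => ?_
    simp only [inner_sub_left]
    ring
  have hbound : ∀ x : H,
      ‖(∑' i, lam i / 2 * (⟪x, φ i⟫ : ℝ) ^ 2) - (∑' i, lam i / 2 * (⟪y, φ i⟫ : ℝ) ^ 2)
        - ⟪g, x - y⟫‖ ≤ β / 2 * ‖x - y‖ ^ 2 := by
    intro x
    rw [hkey x, Real.norm_eq_abs, abs_of_nonneg]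
    · calc (∑' i, lam i / 2 * (⟪x - y, φ i⟫ : ℝ) ^ 2)
          ≤ ∑' i, β / 2 * (⟪x - y, φ i⟫ : ℝ) ^ 2 := by
            refine Summable.tsum_le_tsum (fun i => ?_) (hfs (x - y))
              ((aux_sq_summable φ (x - y)).mul_left (β / 2))
            have := (hlam i).2
            nlinarith [sq_nonneg (⟪x - y, φ i⟫ : ℝ)]
        _ = β / 2 * ‖x - y‖ ^ 2 := by rw [tsum_mul_left, aux_parseval]
    · refine tsum_nonneg fun i => ?_
      have h1 := (hlam i).1
      have : (0:ℝ) ≤ lam i / 2 := by linarith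
      exact mul_nonneg this (sq_nonneg _)
  rw [hasGradientAt_iff_isLittleO, Asymptotics.isLittleO_iff]
  intro ε hε
  have hball : ∀ᶠ x in nhds y, ‖x - y‖ ≤ 2 * ε / β := by
    have : Metric.closedBall y (2 * ε / β) ∈ nhds y :=
      Metric.closedBall_mem_nhds y (by positivity)
    filter_upwards [this] with x hx
    rwa [Metric.mem_closedBall, dist_eq_norm] at hx
  filter_upwards [hball] with x hx
  calc ‖(∑' i, lam i / 2 * (⟪x, φ i⟫ : ℝ) ^ 2) - (∑' i, lam i / 2 * (⟪y, φ i⟫ : ℝ) ^ 2)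
        - ⟪g, x - y⟫‖ ≤ β / 2 * ‖x - y‖ ^ 2 := hbound x
    _ ≤ ε * ‖x - y‖ := by
        have hx' : ‖x - y‖ * β ≤ 2 * ε := (le_div_iff₀ hβ).mp hx
        nlinarith [norm_nonneg (x - y), mul_le_mul_of_nonneg_right hx' (norm_nonneg (x - y))]
end

section
/- For every γ > 0 and every y ∈ H, the point p = Σ_i (1/(1 + γ·λ_i))·⟨y, φ_i⟩·φ_i is the unique minimizer over H of the function x ↦ f(x) + (1/(2γ))·‖x - y‖²; that is, prox_{γf}(y) = Σ_i (1/(1 + γ·λ_i))·⟨y, φ_i⟩·φ_i. -/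
open RealInnerProductSpace

private lemma key_id (l γ cb c : ℝ) (hγ : γ ≠ 0) (hd : 1 + γ*l ≠ 0) :
    l/2*c^2 + 1/(2*γ)*(c - cb)^2 =
    (l/2*((1/(1+γ*l))*cb)^2 + 1/(2*γ)*((1/(1+γ*l))*cb - cb)^2)
      + (l/2 + 1/(2*γ))*(c - (1/(1+γ*l))*cb)^2 := by
  have hd' : 1 + l*γ ≠ 0 := by rwa [mul_comm]
  field_simp
  ring

private lemma parseval {H : Type*} [NormedAddCommGroup H] [InnerProductSpace ℝ H]
    [CompleteSpace H] {ι : Type*} (φ : HilbertBasis ι ℝ H) (x : H) :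
    HasSum (fun i => (⟪x, φ i⟫:ℝ)^2) (‖x‖^2) := by
  have h := φ.hasSum_inner_mul_inner x x
  rw [real_inner_self_eq_norm_sq] at h
  convert h using 2 with i
  · rfl
  rw [real_inner_comm x (φ i), sq]

/-- For every `γ > 0` and `y ∈ H`, the point `p = Σ_i (1/(1+γλ i)) • ⟪y, φ i⟫ • φ i` is the
unique minimizer over `H` of `x ↦ f x + (1/(2γ)) ‖x - y‖²`, where
`f x = Σ_i (λ i / 2) ⟪x, φ i⟫²`; i.e. `prox_{γf}(y) = p`. -/
theorem prox_formula {H : Type*} [NormedAddCommGroup H] [InnerProductSpace ℝ H]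
    [CompleteSpace H] {ι : Type*} (φ : HilbertBasis ι ℝ H)
    (σ β : ℝ) (hσ : 0 < σ) (hσβ : σ ≤ β) (lam : ι → ℝ)
    (hlam : ∀ i, σ ≤ lam i ∧ lam i ≤ β) (γ : ℝ) (hγ : 0 < γ) (y : H) :
    (∀ x : H,
      (∑' i, lam i / 2 * ⟪(∑' i, (1 / (1 + γ * lam i)) • (⟪y, φ i⟫ : ℝ) • φ i), φ i⟫ ^ 2) +
          1 / (2 * γ) * ‖(∑' i, (1 / (1 + γ * lam i)) • (⟪y, φ i⟫ : ℝ) • φ i) - y‖ ^ 2 ≤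
        (∑' i, lam i / 2 * ⟪x, φ i⟫ ^ 2) + 1 / (2 * γ) * ‖x - y‖ ^ 2) ∧
    (∀ q : H,
      (∀ x : H,
        (∑' i, lam i / 2 * ⟪q, φ i⟫ ^ 2) + 1 / (2 * γ) * ‖q - y‖ ^ 2 ≤
          (∑' i, lam i / 2 * ⟪x, φ i⟫ ^ 2) + 1 / (2 * γ) * ‖x - y‖ ^ 2) →
      q = ∑' i, (1 / (1 + γ * lam i)) • (⟪y, φ i⟫ : ℝ) • φ i) := by
  have hlampos : ∀ i, 0 < lam i := fun i => lt_of_lt_of_le hσ (hlam i).1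
  have hden : ∀ i, 0 < 1 + γ * lam i := fun i => by nlinarith [hlampos i]
  have hby : HasSum (fun i => (⟪y, φ i⟫:ℝ)^2) (‖y‖^2) := parseval φ y
  -- g ∈ ℓ²
  have hgmem : Memℓp (fun i => (1 / (1 + γ * lam i)) * (⟪y, φ i⟫:ℝ)) 2 := by
    apply memℓp_gen
    have h2 : (2 : ENNReal).toReal = (2:ℕ) := by simp
    rw [h2]
    simp only [Real.rpow_natCast]
    apply Summable.of_nonneg_of_le (fun i => by positivity) (fun i => ?_) hby.summable
    have h1 : ‖(1 / (1 + γ * lam i)) * (⟪y, φ i⟫:ℝ)‖^(2:ℕ)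
        = (1/(1+γ*lam i))^2 * (⟪y, φ i⟫:ℝ)^2 := by
      rw [Real.norm_eq_abs, ← abs_pow, abs_of_nonneg (by positivity)]; ring
    rw [h1]
    have hfrac : (1/(1+γ*lam i))^2 ≤ 1 := by
      apply pow_le_one₀ (div_nonneg zero_le_one (hden i).le)
      rw [div_le_one (hden i)]
      nlinarith [hlampos i]
    nlinarith [sq_nonneg (⟪y, φ i⟫:ℝ)]
  set p : H := φ.repr.symm ⟨fun i => (1 / (1 + γ * lam i)) * (⟪y, φ i⟫:ℝ), hgmem⟩ with hpdef
  have hreprp : ∀ i, φ.repr p i = (1 / (1 + γ * lam i)) * (⟪y, φ i⟫:ℝ) := by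
    intro i
    rw [hpdef, LinearIsometryEquiv.apply_symm_apply]
  have hcp : ∀ i, (⟪p, φ i⟫:ℝ) = (1 / (1 + γ * lam i)) * (⟪y, φ i⟫:ℝ) := by
    intro i
    rw [real_inner_comm, ← φ.repr_apply_apply, hreprp]
  -- the tsum equals p
  have hptsum : (∑' i, (1 / (1 + γ * lam i)) • (⟪y, φ i⟫ : ℝ) • φ i) = p := by
    have h := φ.hasSum_repr p
    have h2 : HasSum (fun i => (1 / (1 + γ * lam i)) • (⟪y, φ i⟫ : ℝ) • φ i) p := by
      convert h using 2 with i
      rw [hreprp, smul_smul]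
    exact h2.tsum_eq
  rw [hptsum]
  -- summability of the two pieces
  have hS1 : ∀ x : H, Summable (fun i => lam i / 2 * (⟪x, φ i⟫:ℝ)^2) := by
    intro x
    apply Summable.of_nonneg_of_le
      (fun i => mul_nonneg (by linarith [hlampos i]) (sq_nonneg _)) (fun i => ?_)
      (((parseval φ x).summable).mul_left (β/2))
    have : lam i / 2 ≤ β / 2 := by linarith [(hlam i).2]
    nlinarith [sq_nonneg (⟪x, φ i⟫:ℝ)]
  have hS2 : ∀ x : H, Summable (fun i => 1/(2*γ) * ((⟪x, φ i⟫:ℝ) - ⟪y, φ i⟫)^2) := by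
    intro x
    have h := (parseval φ (x - y)).summable.mul_left (1/(2*γ))
    have he : (fun i => 1/(2*γ) * ((⟪x-y, φ i⟫:ℝ))^2)
        = fun i => 1/(2*γ) * ((⟪x, φ i⟫:ℝ) - ⟪y, φ i⟫)^2 := by
      funext i; rw [inner_sub_left]
    exact he ▸ h
  have hSh : ∀ x : H, Summable
      (fun i => lam i / 2 * (⟪x, φ i⟫:ℝ)^2 + 1/(2*γ) * ((⟪x, φ i⟫:ℝ) - ⟪y, φ i⟫)^2) :=
    fun x => (hS1 x).add (hS2 x)
  -- F x as a single tsum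
  have hF : ∀ x : H,
      (∑' i, lam i / 2 * (⟪x, φ i⟫:ℝ)^2) + 1 / (2 * γ) * ‖x - y‖ ^ 2
        = ∑' i, (lam i / 2 * (⟪x, φ i⟫:ℝ)^2 + 1/(2*γ) * ((⟪x, φ i⟫:ℝ) - ⟪y, φ i⟫)^2) := by
    intro x
    have h2 : 1 / (2 * γ) * ‖x - y‖ ^ 2
        = ∑' i, 1/(2*γ) * ((⟪x, φ i⟫:ℝ) - ⟪y, φ i⟫)^2 := by
      have h3 := ((parseval φ (x - y)).mul_left (1/(2*γ))).tsum_eq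
      rw [← h3]
      congr 1; funext i; rw [inner_sub_left]
    rw [h2, Summable.tsum_add (hS1 x) (hS2 x)]
  -- termwise identity
  have hterm : ∀ (x : H) (i : ι),
      lam i / 2 * (⟪x, φ i⟫:ℝ)^2 + 1/(2*γ) * ((⟪x, φ i⟫:ℝ) - ⟪y, φ i⟫)^2
        = (lam i / 2 * (⟪p, φ i⟫:ℝ)^2 + 1/(2*γ) * ((⟪p, φ i⟫:ℝ) - ⟪y, φ i⟫)^2)
          + (lam i / 2 + 1/(2*γ)) * ((⟪x, φ i⟫:ℝ) - (1/(1+γ*lam i)) * ⟪y, φ i⟫)^2 := by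
    intro x i
    rw [hcp i]
    exact key_id (lam i) γ (⟪y, φ i⟫:ℝ) (⟪x, φ i⟫:ℝ) hγ.ne' (hden i).ne'
  have hterm_nonneg : ∀ (x : H) (i : ι),
      0 ≤ (lam i / 2 + 1/(2*γ)) * ((⟪x, φ i⟫:ℝ) - (1/(1+γ*lam i)) * ⟪y, φ i⟫)^2 := by
    intro x i
    apply mul_nonneg _ (sq_nonneg _)
    have := hlampos i
    have : 0 < 1/(2*γ) := by positivity
    linarith [hlampos i]
  have hminle : ∀ x : H,
      (∑' i, lam i / 2 * (⟪p, φ i⟫:ℝ)^2) + 1 / (2 * γ) * ‖p - y‖ ^ 2 ≤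
      (∑' i, lam i / 2 * (⟪x, φ i⟫:ℝ)^2) + 1 / (2 * γ) * ‖x - y‖ ^ 2 := by
    intro x
    rw [hF p, hF x]
    apply Summable.tsum_le_tsum _ (hSh p) (hSh x)
    intro i
    rw [hterm x i]
    linarith [hterm_nonneg x i]
  refine ⟨hminle, ?_⟩
  intro q hq
  have hqp := hq p
  rw [hF q, hF p] at hqp
  set D : ι → ℝ := fun i =>
    (lam i / 2 + 1/(2*γ)) * ((⟪q, φ i⟫:ℝ) - (1/(1+γ*lam i)) * ⟪y, φ i⟫)^2 with hD
  have hDsum : Summable D := by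
    have h := (hSh q).sub (hSh p)
    convert h using 1
    · rfl
    funext i
    rw [hD]
    have h2 := hterm q i
    simp only []
    linarith [h2]
  have hDnonneg : ∀ i, 0 ≤ D i := fun i => hterm_nonneg q i
  have htD : ∑' i, (lam i / 2 * (⟪q, φ i⟫:ℝ)^2 + 1/(2*γ) * ((⟪q, φ i⟫:ℝ) - ⟪y, φ i⟫)^2)
      = (∑' i, (lam i / 2 * (⟪p, φ i⟫:ℝ)^2 + 1/(2*γ) * ((⟪p, φ i⟫:ℝ) - ⟪y, φ i⟫)^2))
        + ∑' i, D i := by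
    rw [← Summable.tsum_add (hSh p) hDsum]
    congr 1; funext i
    rw [hD, hterm q i]
  have hDle : ∑' i, D i ≤ 0 := by
    rw [htD] at hqp; linarith
  have hDzero : ∀ i, D i = 0 := by
    intro i
    have h1 : D i ≤ ∑' j, D j := Summable.le_tsum hDsum i (fun j _ => hDnonneg j)
    have h2 := hDnonneg i
    linarith
  have hcoeff : ∀ i, (⟪q, φ i⟫:ℝ) = (1/(1+γ*lam i)) * ⟪y, φ i⟫ := by
    intro i
    have h0 := hDzero i
    rw [hD] at h0
    simp only [] at h0
    have hpos : 0 < lam i / 2 + 1/(2*γ) := by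
      have := hlampos i
      have : 0 < 1/(2*γ) := by positivity
      linarith [hlampos i]
    have hsq : ((⟪q, φ i⟫:ℝ) - (1/(1+γ*lam i)) * ⟪y, φ i⟫)^2 = 0 := by
      rcases mul_eq_zero.mp h0 with h | h
      · exact absurd h hpos.ne'
      · exact h
    have := pow_eq_zero_iff (n := 2) (by norm_num) |>.mp hsq
    linarith
  apply φ.repr.injective
  apply lp.ext
  funext i
  rw [hreprp i, φ.repr_apply_apply, real_inner_comm]
  exact hcoeff i
end

section
/- Let γ > 0, α ∈ (0, 2), and let P : H → H satisfy, for every y ∈ H, that P(y) minimizes x ↦ f(x) + (1/(2γ))·‖x - y‖² over H. Define the generalized Douglas-Rachford operator T(z) = (1 - α)·z + α·(2·P(z) - z) (this is the Douglas-Rachford iteration for f and g ≡ 0, since R_{γg} = Id). Then for every index j and every k ≥ 0, the k-th iterate from initial point φ_j satisfies T^[k](φ_j) = (1 - α + α·(1 - γ·λ_j)/(1 + γ·λ_j))^k · φ_j, and hence ‖T^[k](φ_j)‖ = |1 - α + α·(1 - γ·λ_j)/(1 + γ·λ_j)|^k. -/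
open RealInnerProductSpace

/-- Douglas-Rachford iterates for `f(x) = Σ_i (λ i / 2) ⟪x, φ i⟫²` and `g ≡ 0`:
if `P y` minimizes `x ↦ f x + (1/(2γ)) ‖x - y‖²` for each `y`, and
`T z = (1-α) • z + α • (2 • P z - z)`, then for every index `j` and every `k`,
`T^[k] (φ j) = (1 - α + α (1-γλ j)/(1+γλ j))^k • φ j`, and hence
`‖T^[k] (φ j)‖ = |1 - α + α (1-γλ j)/(1+γλ j)|^k`. -/
theorem DR_iterates_on_basis {H : Type*} [NormedAddCommGroup H] [InnerProductSpace ℝ H]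
    [CompleteSpace H] {ι : Type*} (φ : HilbertBasis ι ℝ H)
    (σ β : ℝ) (hσ : 0 < σ) (hσβ : σ ≤ β) (lam : ι → ℝ)
    (hlam : ∀ i, σ ≤ lam i ∧ lam i ≤ β)
    (γ α : ℝ) (hγ : 0 < γ) (hα₀ : 0 < α) (hα₂ : α < 2)
    (P : H → H)
    (hP : ∀ y x : H,
      (∑' i, lam i / 2 * ⟪P y, φ i⟫ ^ 2) + 1 / (2 * γ) * ‖P y - y‖ ^ 2 ≤
        (∑' i, lam i / 2 * ⟪x, φ i⟫ ^ 2) + 1 / (2 * γ) * ‖x - y‖ ^ 2)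
    (T : H → H)
    (hT : ∀ z : H, T z = (1 - α) • z + α • ((2 : ℝ) • P z - z)) :
    ∀ (j : ι) (k : ℕ),
      T^[k] (φ j) = ((1 - α + α * ((1 - γ * lam j) / (1 + γ * lam j))) ^ k) • φ j ∧
      ‖T^[k] (φ j)‖ = |1 - α + α * ((1 - γ * lam j) / (1 + γ * lam j))| ^ k := by
  classical
  have horth := φ.orthonormal
  have hpos : ∀ j, 0 < 1 + γ * lam j := fun j => by nlinarith [(hlam j).1]
  have hne : ∀ j, (1 + γ * lam j) ≠ 0 := fun j => (hpos j).ne'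
  -- Parseval-type summability
  have hsq : ∀ x : H, HasSum (fun i => (⟪x, φ i⟫ : ℝ) ^ 2) (‖x‖ ^ 2) := by
    intro x
    have h1 := φ.hasSum_inner_mul_inner x x
    have h2 : (⟪x, x⟫ : ℝ) = ‖x‖ ^ 2 := real_inner_self_eq_norm_sq x
    rw [h2] at h1
    have hf : (fun i => (⟪x, φ i⟫ : ℝ) ^ 2) = fun i => ⟪x, φ i⟫ * ⟪φ i, x⟫ := by
      funext i; rw [real_inner_comm (φ i) x]; ring
    rwa [hf]
  have hsum : ∀ x : H, Summable (fun i => lam i / 2 * ⟪x, φ i⟫ ^ 2) := by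
    intro x
    have hb : Summable (fun i => β / 2 * (⟪x, φ i⟫ : ℝ) ^ 2) :=
      (hsq x).summable.mul_left (β / 2)
    have hnn : ∀ i, 0 ≤ lam i / 2 * (⟪x, φ i⟫ : ℝ) ^ 2 := fun i => by
      nlinarith [(hlam i).1, sq_nonneg (⟪x, φ i⟫ : ℝ)]
    have hle : ∀ i, lam i / 2 * (⟪x, φ i⟫ : ℝ) ^ 2 ≤ β / 2 * (⟪x, φ i⟫ : ℝ) ^ 2 := fun i => by
      nlinarith [(hlam i).2, (hlam i).1, sq_nonneg (⟪x, φ i⟫ : ℝ)]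
    exact Summable.of_nonneg_of_le hnn hle hb
  -- inner products with the basis
  have hinner : ∀ (c : ℝ) (j i : ι), (⟪c • φ j, φ i⟫ : ℝ) = if i = j then c else 0 := by
    intro c j i
    rw [real_inner_smul_left, orthonormal_iff_ite.mp horth j i]
    simp [eq_comm]
  -- the key resolvent computation
  have hPkey : ∀ (c : ℝ) (j : ι), P (c • φ j) = (c / (1 + γ * lam j)) • φ j := by
    intro c j
    set d : ℝ := c / (1 + γ * lam j) with hd
    have hdcc : d * (1 + γ * lam j) = c := div_mul_cancel₀ c (hne j)
    have hdc : d - c = -(γ * lam j * d) := by linear_combination hdcc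
    set y : H := c • φ j with hy
    set x₀ : H := d • φ j with hx₀
    have hx0y : x₀ - y = (d - c) • φ j := by rw [hx₀, hy, ← sub_smul]
    -- main strong-convexity inequality
    have main : ∀ x : H,
        (∑' i, lam i / 2 * ⟪x₀, φ i⟫ ^ 2) + 1 / (2 * γ) * ‖x₀ - y‖ ^ 2
          + 1 / (2 * γ) * ‖x - x₀‖ ^ 2 ≤
        (∑' i, lam i / 2 * ⟪x, φ i⟫ ^ 2) + 1 / (2 * γ) * ‖x - y‖ ^ 2 := by
      intro x
      set h : H := x - x₀ with hh
      -- tsum at x₀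
      have t0 : (∑' i, lam i / 2 * ⟪x₀, φ i⟫ ^ 2) = lam j / 2 * d ^ 2 := by
        have : ∀ i, lam i / 2 * ⟪x₀, φ i⟫ ^ 2
            = if i = j then lam j / 2 * d ^ 2 else 0 := by
          intro i
          rw [hx₀, hinner d j i]
          by_cases hij : i = j
          · subst hij; simp
          · simp [hij]
        rw [tsum_congr this, tsum_ite_eq]
      -- tsum at x
      have hx : x = h + x₀ := by rw [hh]; abel
      have tx : (∑' i, lam i / 2 * ⟪x, φ i⟫ ^ 2)
          = (∑' i, lam i / 2 * ⟪h, φ i⟫ ^ 2)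
            + (lam j * d * ⟪h, φ j⟫ + lam j / 2 * d ^ 2) := by
        have hpt : ∀ i, lam i / 2 * ⟪x, φ i⟫ ^ 2
            = lam i / 2 * ⟪h, φ i⟫ ^ 2
              + (if i = j then lam j * d * ⟪h, φ j⟫ + lam j / 2 * d ^ 2 else 0) := by
          intro i
          rw [hx, inner_add_left, hx₀, hinner d j i]
          by_cases hij : i = j
          · subst hij; simp; ring
          · simp [hij]
        rw [tsum_congr hpt, Summable.tsum_add (hsum h)
          ((hasSum_ite_eq j _).summable), tsum_ite_eq]
      -- nonnegativity of the quadratic tail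
      have tnn : 0 ≤ ∑' i, lam i / 2 * ⟪h, φ i⟫ ^ 2 :=
        tsum_nonneg fun i => by nlinarith [(hlam i).1, sq_nonneg (⟪h, φ i⟫ : ℝ)]
      -- norm expansion
      have hxy : x - y = h + (x₀ - y) := by rw [hh]; abel
      have nxy : ‖x - y‖ ^ 2
          = ‖h‖ ^ 2 + 2 * ((d - c) * ⟪h, φ j⟫) + (d - c) ^ 2 := by
        rw [hxy, norm_add_sq_real, hx0y, real_inner_smul_right, norm_smul]
        have : ‖φ j‖ = 1 := horth.1 j
        rw [this, Real.norm_eq_abs]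
        ring_nf
        rw [sq_abs]
        ring
      have nx0y : ‖x₀ - y‖ ^ 2 = (d - c) ^ 2 := by
        rw [hx0y, norm_smul, horth.1 j]
        simp [mul_pow, sq_abs]
      rw [t0, tx, nxy, nx0y]
      have hcancel : lam j * d * ⟪h, φ j⟫ + 1 / (2 * γ) * (2 * ((d - c) * ⟪h, φ j⟫)) = 0 := by
        rw [hdc]
        field_simp
        ring
      have : ‖x - x₀‖ = ‖h‖ := by rw [hh]
      rw [this]
      nlinarith [tnn]
    -- conclude P y = x₀
    have h1 := hP y x₀
    have h2 := main (P y)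
    have hc2 : 0 < 1 / (2 * γ) := by positivity
    have h5 : 1 / (2 * γ) * ‖P y - x₀‖ ^ 2 ≤ 1 / (2 * γ) * 0 := by
      rw [mul_zero]; linarith
    have h3 : ‖P y - x₀‖ ^ 2 ≤ 0 := le_of_mul_le_mul_left h5 hc2
    have h4 : ‖P y - x₀‖ = 0 := by nlinarith [norm_nonneg (P y - x₀)]
    have := norm_eq_zero.mp h4
    have := sub_eq_zero.mp this
    rw [this]
  -- the iteration
  intro j k
  set r : ℝ := 1 - α + α * ((1 - γ * lam j) / (1 + γ * lam j)) with hr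
  have hiter : ∀ k : ℕ, T^[k] (φ j) = r ^ k • φ j := by
    intro k
    induction k with
    | zero => simp
    | succ k ih =>
      rw [Function.iterate_succ_apply', ih, hT, hPkey (r ^ k) j]
      match_scalars
      rw [pow_succ]
      generalize r ^ k = s
      rw [hr]
      have h0 := hne j
      field_simp
      ring
  refine ⟨hiter k, ?_⟩
  rw [hiter k, norm_smul, horth.1 j, mul_one, Real.norm_eq_abs, abs_pow]
end

section
/- For all real numbers σ, β, γ, α with 0 < σ ≤ β, 0 < γ ≤ 1/√(σβ), and 0 < α ≤ 1, the following hold: |1 - α + α·(1 - γβ)/(1 + γβ)| ≤ 1 - α + α·(1 - γσ)/(1 + γσ), and 1 - α + α·(1 - γσ)/(1 + γσ) = |1 - α| + α·max((1 - γσ)/(1 + γσ), (γβ - 1)/(1 + γβ)). -/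
/-- Case (ii): for `0 < σ ≤ β`, `0 < γ ≤ 1/√(σβ)` and `0 < α ≤ 1`,
`|1 - α + α(1-γβ)/(1+γβ)| ≤ 1 - α + α(1-γσ)/(1+γσ)`, and the latter equals the rate bound
`|1-α| + α·max((1-γσ)/(1+γσ), (γβ-1)/(1+γβ))`. -/
theorem rate_case_ii (σ β γ α : ℝ) (hσ : 0 < σ) (hσβ : σ ≤ β)
    (hγ₀ : 0 < γ) (hγ₁ : γ ≤ 1 / Real.sqrt (σ * β)) (hα₀ : 0 < α) (hα₁ : α ≤ 1) :
    |1 - α + α * ((1 - γ * β) / (1 + γ * β))| ≤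
      1 - α + α * ((1 - γ * σ) / (1 + γ * σ)) ∧
    1 - α + α * ((1 - γ * σ) / (1 + γ * σ)) =
      |1 - α| + α * max ((1 - γ * σ) / (1 + γ * σ)) ((γ * β - 1) / (1 + γ * β)) := by
  have hβ : 0 < β := hσ.trans_le hσβ
  have hs : 0 < Real.sqrt (σ * β) := Real.sqrt_pos.mpr (mul_pos hσ hβ)
  have h2 : γ * Real.sqrt (σ * β) ≤ 1 := by
    rw [le_div_iff₀ hs] at hγ₁; exact hγ₁
  have hsq : Real.sqrt (σ * β) ^ 2 = σ * β := Real.sq_sqrt (mul_pos hσ hβ).le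
  have h3 : γ ^ 2 * Real.sqrt (σ * β) ^ 2 ≤ 1 := by nlinarith [mul_pos hγ₀ hs]
  rw [hsq] at h3
  have hsb : (γ * σ) * (γ * β) ≤ 1 := by nlinarith [h3]
  have d1 : 0 < 1 + γ * σ := by positivity
  have d2 : 0 < 1 + γ * β := by positivity
  have hx : (1 - γ * β) / (1 + γ * β) ≤ (1 - γ * σ) / (1 + γ * σ) := by
    rw [div_le_div_iff₀ d2 d1]; nlinarith
  have hxy : -((1 - γ * σ) / (1 + γ * σ)) ≤ (1 - γ * β) / (1 + γ * β) := by
    rw [neg_div', div_le_div_iff₀ d1 d2]; nlinarith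
  have hmax : (γ * β - 1) / (1 + γ * β) ≤ (1 - γ * σ) / (1 + γ * σ) := by
    rw [div_le_div_iff₀ d2 d1]; nlinarith
  constructor
  · rw [abs_le]
    constructor
    · nlinarith [mul_le_mul_of_nonneg_left hxy hα₀.le]
    · nlinarith [mul_le_mul_of_nonneg_left hx hα₀.le]
  · rw [max_eq_left hmax, abs_of_nonneg (by linarith : (0:ℝ) ≤ 1 - α)]
end

section
/- For all real numbers σ, β, γ, α with 0 < σ ≤ β, γ ≥ 1/√(σβ), and 1 ≤ α < 2/(1 + max((1-γσ)/(1+γσ), (γβ-1)/(1+γβ))), the following hold: |1 - α + α·(1 - γσ)/(1 + γσ)| ≤ α - 1 + α·(γβ - 1)/(1 + γβ), and α - 1 + α·(γβ - 1)/(1 + γβ) = |1 - α| + α·max((1 - γσ)/(1 + γσ), (γβ - 1)/(1 + γβ)). -/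
/-- Case (iii): for `0 < σ ≤ β`, `γ ≥ 1/√(σβ)` and
`1 ≤ α < 2/(1 + max((1-γσ)/(1+γσ), (γβ-1)/(1+γβ)))`,
`|1 - α + α(1-γσ)/(1+γσ)| ≤ α - 1 + α(γβ-1)/(1+γβ)`, and the latter equals the rate bound
`|1-α| + α·max((1-γσ)/(1+γσ), (γβ-1)/(1+γβ))`. -/
theorem rate_case_iii (σ β γ α : ℝ) (hσ : 0 < σ) (hσβ : σ ≤ β)
    (hγ : 1 / Real.sqrt (σ * β) ≤ γ) (hα₁ : 1 ≤ α)
    (hα₂ : α < 2 / (1 + max ((1 - γ * σ) / (1 + γ * σ)) ((γ * β - 1) / (1 + γ * β)))) :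
    |1 - α + α * ((1 - γ * σ) / (1 + γ * σ))| ≤
      α - 1 + α * ((γ * β - 1) / (1 + γ * β)) ∧
    α - 1 + α * ((γ * β - 1) / (1 + γ * β)) =
      |1 - α| + α * max ((1 - γ * σ) / (1 + γ * σ)) ((γ * β - 1) / (1 + γ * β)) := by
  have hβ : 0 < β := lt_of_lt_of_le hσ hσβ
  have hσβ0 : 0 < σ * β := mul_pos hσ hβ
  have hsqrt : 0 < Real.sqrt (σ * β) := Real.sqrt_pos.mpr hσβ0
  have hγ0 : 0 < γ := lt_of_lt_of_le (by positivity) hγ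
  have h1 : 1 ≤ γ * Real.sqrt (σ * β) := by
    rw [div_le_iff₀ hsqrt] at hγ
    linarith
  have hsq : Real.sqrt (σ * β) ^ 2 = σ * β := Real.sq_sqrt hσβ0.le
  have hkey : 1 ≤ γ ^ 2 * (σ * β) := by
    nlinarith [hsqrt.le]
  have hd1 : (0:ℝ) < 1 + γ * σ := by positivity
  have hd2 : (0:ℝ) < 1 + γ * β := by positivity
  have hsb : (1 - γ * σ) / (1 + γ * σ) ≤ (γ * β - 1) / (1 + γ * β) := by
    rw [div_le_div_iff₀ hd1 hd2]
    nlinarith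
  have hnsb : -((1 - γ * σ) / (1 + γ * σ)) ≤ (γ * β - 1) / (1 + γ * β) := by
    rw [neg_div', div_le_div_iff₀ hd1 hd2]
    nlinarith
  have hα0 : (0:ℝ) < α := lt_of_lt_of_le one_pos hα₁
  constructor
  · rw [abs_le]
    constructor
    · nlinarith [mul_le_mul_of_nonneg_left hnsb hα0.le]
    · nlinarith [mul_le_mul_of_nonneg_left hsb hα0.le]
  · rw [max_eq_right hsb, abs_of_nonpos (by linarith : 1 - α ≤ 0)]
    ring
end

section
/- Let γ ∈ (0, 1/√(σβ)] and α ∈ (0, 1], and let P : H → H satisfy, for every y ∈ H, that P(y) minimizes x ↦ f(x) + (1/(2γ))·‖x - y‖². Define T(z) = (1 - α)·z + α·(2·P(z) - z). Then for every index j with λ_j = σ and every k ≥ 0, ‖T^[k](φ_j)‖ = ρ^k·‖φ_j‖, where ρ = |1 - α| + α·max((1 - γσ)/(1 + γσ), (γβ - 1)/(1 + γβ)). Hence the generalized Douglas-Rachford algorithm applied to minimize f + g with g ≡ 0 converges exactly with rate ρ, so the linear rate bound ρ is tight in this parameter regime. -/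
open RealInnerProductSpace

set_option maxHeartbeats 1000000

/-- Tightness of the Douglas-Rachford rate, case `γ ∈ (0, 1/√(σβ)]`, `α ∈ (0,1]`:
with `f(x) = Σ_i (λ i / 2) ⟪x, φ i⟫²` (each `λ i ∈ {σ, β}`, both values attained),
if `P y` minimizes `x ↦ f x + (1/(2γ)) ‖x - y‖²` and
`T z = (1-α) • z + α • (2 • P z - z)`, then for every `j` with `λ j = σ` and every `k`,
`‖T^[k] (φ j)‖ = ρ^k ‖φ j‖` where
`ρ = |1-α| + α·max((1-γσ)/(1+γσ), (γβ-1)/(1+γβ))`, so the rate bound `ρ` is tight. -/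
theorem DR_rate_tight_case_ii {H : Type*} [NormedAddCommGroup H] [InnerProductSpace ℝ H]
    [CompleteSpace H] {ι : Type*} (φ : HilbertBasis ι ℝ H)
    (σ β : ℝ) (hσ : 0 < σ) (hσβ : σ ≤ β) (lam : ι → ℝ)
    (hlam : ∀ i, lam i = σ ∨ lam i = β)
    (hIσ : ∃ i, lam i = σ) (hIβ : ∃ i, lam i = β)
    (γ α : ℝ) (hγ₀ : 0 < γ) (hγ₁ : γ ≤ 1 / Real.sqrt (σ * β))
    (hα₀ : 0 < α) (hα₁ : α ≤ 1)
    (P : H → H)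
    (hP : ∀ y x : H,
      (∑' i, lam i / 2 * ⟪P y, φ i⟫ ^ 2) + 1 / (2 * γ) * ‖P y - y‖ ^ 2 ≤
        (∑' i, lam i / 2 * ⟪x, φ i⟫ ^ 2) + 1 / (2 * γ) * ‖x - y‖ ^ 2)
    (T : H → H)
    (hT : ∀ z : H, T z = (1 - α) • z + α • ((2 : ℝ) • P z - z)) :
    ∀ j : ι, lam j = σ → ∀ k : ℕ,
      ‖T^[k] (φ j)‖ =
        (|1 - α| +
          α * max ((1 - γ * σ) / (1 + γ * σ)) ((γ * β - 1) / (1 + γ * β))) ^ k * ‖φ j‖ := by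
  classical
  have hβ : 0 < β := lt_of_lt_of_le hσ hσβ
  have hlam_pos : ∀ i, 0 < lam i := fun i => (hlam i).elim (fun h => h ▸ hσ) (fun h => h ▸ hβ)
  have hlam_le : ∀ i, lam i ≤ β := fun i => (hlam i).elim (fun h => h ▸ hσβ) le_of_eq
  have horth := φ.orthonormal
  have hnorm : ∀ i, ‖φ i‖ = 1 := horth.1
  have hij : ∀ i j : ι, ⟪φ i, φ j⟫ = if i = j then 1 else 0 := fun i j =>
    orthonormal_iff_ite.mp horth i j
  -- bounds from hγ₁
  have hsqrt : 0 < Real.sqrt (σ * β) := Real.sqrt_pos.mpr (by positivity)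
  have hγsb : γ * Real.sqrt (σ * β) ≤ 1 := by
    rw [le_div_iff₀ hsqrt] at hγ₁; exact hγ₁
  have hss : Real.sqrt (σ * β) ^ 2 = σ * β := Real.sq_sqrt (by positivity)
  have hγ2 : γ ^ 2 * (σ * β) ≤ 1 := by
    have h := mul_le_mul hγsb hγsb (by positivity) zero_le_one
    rw [← hss]
    nlinarith [h]
  have hγσ : γ * σ ≤ 1 := by
    nlinarith [mul_le_mul_of_nonneg_left hσβ (le_of_lt (by positivity : (0:ℝ) < γ ^ 2 * σ)),
      mul_pos hγ₀ hσ]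
  have hdσ : 0 < 1 + γ * σ := by positivity
  have hdβ : 0 < 1 + γ * β := by positivity
  have hmax : max ((1 - γ * σ) / (1 + γ * σ)) ((γ * β - 1) / (1 + γ * β))
      = (1 - γ * σ) / (1 + γ * σ) := by
    rw [max_eq_left]
    rw [div_le_div_iff₀ hdβ hdσ]
    nlinarith
  -- summability of the coordinate series
  have hsum : ∀ x : H, Summable (fun i => lam i / 2 * ⟪x, φ i⟫ ^ 2) := by
    intro x
    have h2 : Summable (fun i => ⟪x, φ i⟫ ^ 2) := by
      have := (φ.hasSum_inner_mul_inner x x).summable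
      refine this.congr fun i => ?_
      rw [real_inner_comm (φ i) x]; ring
    refine Summable.of_nonneg_of_le (fun i => ?_) (fun i => ?_) (h2.mul_left (β / 2))
    · have := (hlam_pos i).le
      positivity
    · have h1 : (0:ℝ) ≤ ⟪x, φ i⟫ ^ 2 := sq_nonneg _
      have h2 := hlam_le i
      nlinarith
  set fval : H → ℝ := fun x => ∑' i, lam i / 2 * ⟪x, φ i⟫ ^ 2 with hfval
  have hfval_def : ∀ x : H, fval x = ∑' i, lam i / 2 * ⟪x, φ i⟫ ^ 2 := fun _ => rfl
  have hfval_nonneg : ∀ x, 0 ≤ fval x := fun x =>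
    tsum_nonneg fun i => by have := (hlam_pos i).le; positivity
  intro j hj
  -- the split lemma at coordinate j
  have hinner : ∀ (s : ℝ) (x : H) (i : ι),
      ⟪x - s • φ j, φ i⟫ = ⟪x, φ i⟫ - s * (if j = i then 1 else 0) := by
    intro s x i
    rw [inner_sub_left, real_inner_smul_left, hij j i]
  have hsplit : ∀ (s : ℝ) (x : H),
      fval x = fval (x - s • φ j) + σ / 2 * (⟪x, φ j⟫ ^ 2 - (⟪x, φ j⟫ - s) ^ 2) := by
    intro s x
    rw [hfval_def x, hfval_def (x - s • φ j)]
    rw [Summable.tsum_eq_add_tsum_ite (hsum x) j, Summable.tsum_eq_add_tsum_ite (hsum (x - s • φ j)) j]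
    have heq : (∑' i, if i = j then 0 else lam i / 2 * ⟪x - s • φ j, φ i⟫ ^ 2)
        = ∑' i, if i = j then 0 else lam i / 2 * ⟪x, φ i⟫ ^ 2 := by
      refine tsum_congr fun i => ?_
      by_cases h : i = j
      · simp [h]
      · rw [if_neg h, if_neg h, hinner, if_neg (fun hh => h hh.symm)]; ring
    rw [heq, hinner, if_pos rfl, hj]
    ring
  -- value of P on multiples of φ j
  have hPj : ∀ c : ℝ, P (c • φ j) = (c / (1 + γ * σ)) • φ j := by
    intro c
    set s := c / (1 + γ * σ) with hs
    have hsc : s * (1 + γ * σ) = c := by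
      rw [hs]; field_simp
    set y := c • φ j with hy
    set xs := s • φ j with hxs
    have hinnerxs : ∀ x : H, ⟪x - xs, φ j⟫ = ⟪x, φ j⟫ - s := by
      intro x; rw [hxs, hinner, if_pos rfl]; ring
    have hfxs : fval xs = σ / 2 * s ^ 2 := by
      have h0 : xs - s • φ j = 0 := by rw [hxs]; abel
      have hxsj : ⟪xs, φ j⟫ = s := by
        rw [hxs, real_inner_smul_left, hij j j, if_pos rfl]; ring
      have hf0 : fval (0 : H) = 0 := by
        rw [hfval_def]; simp
      have h := hsplit s xs
      rw [h0, hxsj, hf0] at h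
      rw [h]; ring
    have key : ∀ x : H, fval xs + 1 / (2 * γ) * ‖xs - y‖ ^ 2 + 1 / (2 * γ) * ‖x - xs‖ ^ 2
        ≤ fval x + 1 / (2 * γ) * ‖x - y‖ ^ 2 := by
      intro x
      set a := ⟪x, φ j⟫ with ha
      have hxy : x - y = (x - xs) + (s - c) • φ j := by
        rw [hy, hxs, sub_smul]; abel
      have hxynorm : ‖x - y‖ ^ 2 = ‖x - xs‖ ^ 2 + 2 * ((s - c) * (a - s)) + (s - c) ^ 2 := by
        rw [hxy, norm_add_sq_real, real_inner_smul_right, hinnerxs x, norm_smul, hnorm j,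
          mul_one, Real.norm_eq_abs, sq_abs, ← ha]
      have hxsy : ‖xs - y‖ ^ 2 = (s - c) ^ 2 := by
        have h : xs - y = (s - c) • φ j := by rw [hxs, hy, sub_smul]
        rw [h, norm_smul, hnorm j, mul_one, Real.norm_eq_abs, sq_abs]
      have hsplit' := hsplit s x
      rw [← ha] at hsplit'
      have hnn := hfval_nonneg (x - s • φ j)
      have hsc' : s - c = -(γ * σ * s) := by linear_combination hsc
      have hlin : 1 / (2 * γ) * (2 * ((s - c) * (a - s))) = -(σ * s * (a - s)) := by
        rw [hsc']
        field_simp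
      rw [hsplit', hxynorm, hxsy, hfxs, hxs]
      nlinarith [hnn, hlin]
    have h1 := hP y xs
    rw [← hfval_def, ← hfval_def] at h1
    have h2 := key (P y)
    have hγ' : (0:ℝ) < 1 / (2 * γ) := by positivity
    have hnorm0 : ‖P y - xs‖ ^ 2 ≤ 0 := by nlinarith [h1, h2]
    have hz : P y - xs = 0 := by
      have hn : ‖P y - xs‖ = 0 := by
        nlinarith [sq_nonneg ‖P y - xs‖, norm_nonneg (P y - xs)]
      exact norm_eq_zero.mp hn
    have h3 := sub_eq_zero.mp hz
    rw [hy, hxs] at h3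
    exact h3
  -- action of T on multiples of φ j
  set r : ℝ := (1 - α) + α * ((1 - γ * σ) / (1 + γ * σ)) with hr
  have hr_nonneg : 0 ≤ r := by
    have h1 : 0 ≤ (1 - γ * σ) / (1 + γ * σ) := by
      apply div_nonneg <;> linarith
    have h2 : 0 ≤ α * ((1 - γ * σ) / (1 + γ * σ)) := by positivity
    rw [hr]; linarith
  have hTc : ∀ c : ℝ, T (c • φ j) = (r * c) • φ j := by
    intro c
    rw [hT, hPj c]
    simp only [smul_smul, ← sub_smul, ← add_smul]
    congr 1
    rw [hr]
    field_simp
    ring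
  -- iterate
  have hiter : ∀ k : ℕ, T^[k] (φ j) = (r ^ k) • φ j := by
    intro k
    induction k with
    | zero => simp
    | succ k ih =>
      rw [Function.iterate_succ_apply', ih, hTc, pow_succ, mul_comm]
  intro k
  have hρ : |1 - α| + α * max ((1 - γ * σ) / (1 + γ * σ)) ((γ * β - 1) / (1 + γ * β)) = r := by
    rw [hmax, abs_of_nonneg (by linarith : (0:ℝ) ≤ 1 - α), hr]
  rw [hρ, hiter k, norm_smul, hnorm j, Real.norm_eq_abs, abs_pow, abs_of_nonneg hr_nonneg]
end

section
/- Let γ ∈ [1/√(σβ), ∞) and α ∈ [1, 2/(1 + max((1-γσ)/(1+γσ), (γβ-1)/(1+γβ)))), and let P : H → H satisfy, for every y ∈ H, that P(y) minimizes x ↦ f(x) + (1/(2γ))·‖x - y‖². Define T(z) = (1 - α)·z + α·(2·P(z) - z). Then for every index j with λ_j = β and every k ≥ 0, ‖T^[k](φ_j)‖ = ρ^k·‖φ_j‖, where ρ = |1 - α| + α·max((1 - γσ)/(1 + γσ), (γβ - 1)/(1 + γβ)). Hence the generalized Douglas-Rachford algorithm applied to minimize f + g with g ≡ 0 converges exactly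 with rate ρ, so the linear rate bound ρ is tight in this parameter regime. -/
set_option maxHeartbeats 1000000


open RealInnerProductSpace

/-- Tightness of the Douglas-Rachford rate, case `γ ∈ [1/√(σβ), ∞)`,
`α ∈ [1, 2/(1 + max((1-γσ)/(1+γσ), (γβ-1)/(1+γβ))))`:
with `f(x) = Σ_i (λ i / 2) ⟪x, φ i⟫²` (each `λ i ∈ {σ, β}`, both values attained),
if `P y` minimizes `x ↦ f x + (1/(2γ)) ‖x - y‖²` and
`T z = (1-α) • z + α • (2 • P z - z)`, then for every `j` with `λ j = β` and every `k`,
`‖T^[k] (φ j)‖ = ρ^k ‖φ j‖` where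
`ρ = |1-α| + α·max((1-γσ)/(1+γσ), (γβ-1)/(1+γβ))`, so the rate bound `ρ` is tight. -/
theorem DR_rate_tight_case_iii {H : Type*} [NormedAddCommGroup H] [InnerProductSpace ℝ H]
    [CompleteSpace H] {ι : Type*} (φ : HilbertBasis ι ℝ H)
    (σ β : ℝ) (hσ : 0 < σ) (hσβ : σ ≤ β) (lam : ι → ℝ)
    (hlam : ∀ i, lam i = σ ∨ lam i = β)
    (hIσ : ∃ i, lam i = σ) (hIβ : ∃ i, lam i = β)
    (γ α : ℝ) (hγ : 1 / Real.sqrt (σ * β) ≤ γ)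
    (hα₁ : 1 ≤ α)
    (hα₂ : α < 2 / (1 + max ((1 - γ * σ) / (1 + γ * σ)) ((γ * β - 1) / (1 + γ * β))))
    (P : H → H)
    (hP : ∀ y x : H,
      (∑' i, lam i / 2 * ⟪P y, φ i⟫ ^ 2) + 1 / (2 * γ) * ‖P y - y‖ ^ 2 ≤
        (∑' i, lam i / 2 * ⟪x, φ i⟫ ^ 2) + 1 / (2 * γ) * ‖x - y‖ ^ 2)
    (T : H → H)
    (hT : ∀ z : H, T z = (1 - α) • z + α • ((2 : ℝ) • P z - z)) :
    ∀ j : ι, lam j = β → ∀ k : ℕ,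
      ‖T^[k] (φ j)‖ =
        (|1 - α| +
          α * max ((1 - γ * σ) / (1 + γ * σ)) ((γ * β - 1) / (1 + γ * β))) ^ k * ‖φ j‖ := by
  classical
  intro j hj k
  have hβ : 0 < β := lt_of_lt_of_le hσ hσβ
  have hσβpos : (0:ℝ) < σ * β := mul_pos hσ hβ
  have hsqrt : 0 < Real.sqrt (σ * β) := Real.sqrt_pos.2 hσβpos
  have hγ0 : 0 < γ := lt_of_lt_of_le (by positivity) hγ
  have hγ2 : 1 ≤ γ ^ 2 * (σ * β) := by
    have h1 : 1 ≤ γ * Real.sqrt (σ * β) := by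
      rw [div_le_iff₀ hsqrt] at hγ; linarith [hγ]
    have h2 : Real.sqrt (σ * β) ^ 2 = σ * β := Real.sq_sqrt hσβpos.le
    nlinarith [h1, h2, hsqrt]
  have hγβ1 : 1 ≤ γ * β := by
    have hb : 1 ≤ (γ * β) ^ 2 := by
      nlinarith [hγ2, mul_nonneg (mul_nonneg (sq_nonneg γ) hβ.le) (sub_nonneg.2 hσβ)]
    nlinarith [mul_pos hγ0 hβ, hb]
  have h1γβ : (0:ℝ) < 1 + γ * β := by linarith
  have h1γσ : (0:ℝ) < 1 + γ * σ := by positivity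
  have hmax : max ((1 - γ * σ) / (1 + γ * σ)) ((γ * β - 1) / (1 + γ * β))
      = (γ * β - 1) / (1 + γ * β) := by
    apply max_eq_right
    rw [div_le_div_iff₀ h1γσ h1γβ]
    nlinarith
  set t : ℝ := (γ * β - 1) / (1 + γ * β) with ht
  have ht0 : 0 ≤ t := div_nonneg (by linarith) h1γβ.le
  have hlam_pos : ∀ i, 0 < lam i := fun i => (hlam i).elim (fun h => h ▸ hσ) (fun h => h ▸ hβ)
  have hlam_le : ∀ i, lam i ≤ β := fun i => (hlam i).elim (fun h => h ▸ hσβ) fun h => le_of_eq h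
  have hlam_ge : ∀ i, σ ≤ lam i := fun i => (hlam i).elim (fun h => le_of_eq h.symm)
    (fun h => h ▸ hσβ)
  -- basic summability / Parseval
  have S : ∀ v : H, Summable fun i => ⟪v, φ i⟫ ^ 2 := by
    intro v
    have h := (φ.hasSum_inner_mul_inner v v).summable
    simpa [real_inner_comm, pow_two] using h
  have Pv : ∀ v : H, ∑' i, ⟪v, φ i⟫ ^ 2 = ‖v‖ ^ 2 := by
    intro v
    have h := φ.tsum_inner_mul_inner v v
    rw [real_inner_self_eq_norm_sq] at h
    rw [← h]
    congr 1; ext i; rw [real_inner_comm (φ i) v, pow_two]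
  have SG : ∀ v : H, Summable fun i => lam i / 2 * ⟪v, φ i⟫ ^ 2 := by
    intro v
    refine Summable.of_nonneg_of_le (fun i => ?_) (fun i => ?_) ((S v).mul_left (β / 2))
    · exact mul_nonneg (by linarith [hlam_pos i]) (sq_nonneg _)
    · exact mul_le_mul_of_nonneg_right (by linarith [hlam_le i]) (sq_nonneg _)
  have hite := orthonormal_iff_ite.mp φ.orthonormal
  -- key: P (c • φ j) = (c/(1+γβ)) • φ j
  have key : ∀ c : ℝ, P (c • φ j) = (c / (1 + γ * β)) • φ j := by
    intro c
    set y : H := c • φ j with hy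
    set w : H := (c / (1 + γ * β)) • φ j with hwdef
    set u : H := P y with hu
    have hyi : ∀ i, ⟪y, φ i⟫ = c * (if j = i then (1:ℝ) else 0) := by
      intro i; rw [hy, real_inner_smul_left, hite j i]
    have hwi : ∀ i, ⟪w, φ i⟫ = (c / (1 + γ * β)) * (if j = i then (1:ℝ) else 0) := by
      intro i; rw [hwdef, real_inner_smul_left, hite j i]
    -- pointwise decomposition
    have hpt : ∀ i, lam i / 2 * ⟪u, φ i⟫ ^ 2 + 1 / (2 * γ) * ⟪u - y, φ i⟫ ^ 2
        = (lam i / 2 * ⟪w, φ i⟫ ^ 2 + 1 / (2 * γ) * ⟪w - y, φ i⟫ ^ 2)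
          + (lam i / 2 + 1 / (2 * γ)) * ⟪u - w, φ i⟫ ^ 2 := by
      intro i
      rw [inner_sub_left, inner_sub_left, inner_sub_left, hyi i, hwi i]
      by_cases hij : j = i
      · simp only [hij, if_pos rfl, mul_one]
        have hli : lam i = β := hij ▸ hj
        rw [hli]
        field_simp
        ring
      · simp only [if_neg hij, mul_zero, sub_zero]
        ring
    have Sh : Summable fun i => (lam i / 2 + 1 / (2 * γ)) * ⟪u - w, φ i⟫ ^ 2 := by
      refine Summable.of_nonneg_of_le (fun i => ?_) (fun i => ?_)
        ((S (u - w)).mul_left (β / 2 + 1 / (2 * γ)))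
      · exact mul_nonneg (by have := hlam_pos i; positivity) (sq_nonneg _)
      · exact mul_le_mul_of_nonneg_right (by linarith [hlam_le i]) (sq_nonneg _)
    -- rewrite hP as inequality of single tsums
    have h := hP y w
    rw [← Pv (u - y), ← Pv (w - y), ← tsum_mul_left, ← tsum_mul_left,
      ← Summable.tsum_add (SG u) ((S (u - y)).mul_left (1 / (2 * γ))),
      ← Summable.tsum_add (SG w) ((S (w - y)).mul_left (1 / (2 * γ)))] at h
    have SGu : Summable fun i => lam i / 2 * ⟪u, φ i⟫ ^ 2 + 1 / (2 * γ) * ⟪u - y, φ i⟫ ^ 2 :=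
      (SG u).add ((S (u - y)).mul_left _)
    have SGw : Summable fun i => lam i / 2 * ⟪w, φ i⟫ ^ 2 + 1 / (2 * γ) * ⟪w - y, φ i⟫ ^ 2 :=
      (SG w).add ((S (w - y)).mul_left _)
    have hsplit : (∑' i, (lam i / 2 * ⟪u, φ i⟫ ^ 2 + 1 / (2 * γ) * ⟪u - y, φ i⟫ ^ 2))
        = (∑' i, (lam i / 2 * ⟪w, φ i⟫ ^ 2 + 1 / (2 * γ) * ⟪w - y, φ i⟫ ^ 2))
          + ∑' i, (lam i / 2 + 1 / (2 * γ)) * ⟪u - w, φ i⟫ ^ 2 := by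
      rw [← Summable.tsum_add SGw Sh]
      exact tsum_congr hpt
    have hle0 : ∑' i, (lam i / 2 + 1 / (2 * γ)) * ⟪u - w, φ i⟫ ^ 2 ≤ 0 := by
      rw [hsplit] at h; linarith
    have hlower : σ / 2 * ‖u - w‖ ^ 2 ≤ ∑' i, (lam i / 2 + 1 / (2 * γ)) * ⟪u - w, φ i⟫ ^ 2 := by
      rw [← Pv (u - w), ← tsum_mul_left]
      refine Summable.tsum_le_tsum (fun i => ?_) ((S (u - w)).mul_left (σ / 2)) Sh
      have h1 : σ / 2 ≤ lam i / 2 + 1 / (2 * γ) := by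
        have := hlam_ge i; have : (0:ℝ) ≤ 1 / (2 * γ) := by positivity
        linarith [hlam_ge i]
      exact mul_le_mul_of_nonneg_right h1 (sq_nonneg _)
    have hnorm : ‖u - w‖ ^ 2 ≤ 0 := by nlinarith [hlower, hle0]
    have : u - w = 0 := by
      have h0 : ‖u - w‖ = 0 := le_antisymm (by nlinarith [norm_nonneg (u - w)]) (norm_nonneg _)
      exact norm_eq_zero.mp h0
    have := sub_eq_zero.mp this
    exact this
  -- action of T on span of φ j
  have hTc : ∀ c : ℝ, T (c • φ j) = (-((α - 1) + α * t) * c) • φ j := by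
    intro c
    have h2 : (2:ℝ) • ((c / (1 + γ * β)) • φ j) - c • φ j
        = (2 * (c / (1 + γ * β)) - c) • φ j := by rw [smul_smul, ← sub_smul]
    rw [hT, key c, h2, smul_smul, smul_smul, ← add_smul]
    congr 1
    rw [ht]
    field_simp
    ring
  have hiter : ∀ m : ℕ, T^[m] (φ j) = ((-((α - 1) + α * t)) ^ m) • φ j := by
    intro m
    induction m with
    | zero => rw [Function.iterate_zero_apply, pow_zero, one_smul]
    | succ n ih =>
      rw [Function.iterate_succ_apply', ih, hTc, pow_succ]
      congr 1
      ring
  rw [hiter k, norm_smul, hmax, Real.norm_eq_abs, abs_pow, abs_neg,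
    abs_of_nonneg (by nlinarith : (0:ℝ) ≤ (α - 1) + α * t),
    abs_of_nonpos (by linarith : 1 - α ≤ 0)]
  congr 2
  ring
end

section
/- For every μ ∈ H, the point x* = -Σ_i (ν_i/λ_i)·⟨μ, φ_i⟩·φ_i is the unique minimizer over H of the function x ↦ f(x) + ⟨A(μ), x⟩, and the minimum value equals -Σ_i (ν_i²/(2λ_i))·⟨μ, φ_i⟩². Consequently, the dual function d(μ) := sup_{x ∈ H} (⟨-A(μ), x⟩ - f(x)) satisfies d(μ) = Σ_i (ν_i²/(2λ_i))·⟨μ, φ_i⟩². -/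
open RealInnerProductSpace ENNReal

lemma hilbert_inner_tsum_smul {H : Type*} [NormedAddCommGroup H] [InnerProductSpace ℝ H]
    [CompleteSpace H] {ι : Type*} (φ : HilbertBasis ι ℝ H) (t : ι → ℝ)
    (ht : Summable fun i => t i ^ 2) (j : ι) :
    ⟪(∑' i, t i • φ i : H), φ j⟫ = t j := by
  have hmem : Memℓp t 2 := memℓp_gen (by
    have h1 : ∀ i, ‖t i‖ ^ (2 : ℝ≥0∞).toReal = t i ^ 2 := fun i => by
      rw [ENNReal.toReal_ofNat, Real.rpow_two, Real.norm_eq_abs, sq_abs]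
    simpa only [h1] using ht)
  have hsum : HasSum (fun i => t i • φ i) (φ.repr.symm ⟨t, hmem⟩) :=
    φ.hasSum_repr_symm ⟨t, hmem⟩
  rw [hsum.tsum_eq, real_inner_comm, ← φ.repr_apply_apply]
  rw [LinearIsometryEquiv.apply_symm_apply]


/-- For `f(x) = Σ_i (λ i / 2) ⟪x, φ i⟫²` and `A μ = Σ_i ν i • ⟪μ, φ i⟫ • φ i`:
the point `x* = -Σ_i (ν i / λ i) • ⟪μ, φ i⟫ • φ i` is the unique minimizer of
`x ↦ f x + ⟪A μ, x⟫`, the minimum value equals `-Σ_i (ν i² / (2 λ i)) ⟪μ, φ i⟫²`, and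
consequently the dual function `d(μ) = ⨆_x (⟪-A μ, x⟫ - f x)` satisfies
`d(μ) = Σ_i (ν i² / (2 λ i)) ⟪μ, φ i⟫²`. -/
theorem dual_function_formula {H : Type*} [NormedAddCommGroup H] [InnerProductSpace ℝ H]
    [CompleteSpace H] {ι : Type*} (φ : HilbertBasis ι ℝ H)
    (σ β θ ζ : ℝ) (hσ : 0 < σ) (hσβ : σ ≤ β) (hθ : 0 < θ) (hθζ : θ ≤ ζ)
    (lam ν : ι → ℝ) (hlam : ∀ i, σ ≤ lam i ∧ lam i ≤ β) (hν : ∀ i, θ ≤ ν i ∧ ν i ≤ ζ)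
    (f : H → ℝ) (hf : ∀ x, f x = ∑' i, lam i / 2 * ⟪x, φ i⟫ ^ 2)
    (A : H → H) (hA : ∀ x, A x = ∑' i, ν i • (⟪x, φ i⟫ : ℝ) • φ i)
    (μ : H) (xstar : H)
    (hxstar : xstar = -∑' i, (ν i / lam i) • (⟪μ, φ i⟫ : ℝ) • φ i) :
    (∀ x : H, f xstar + ⟪A μ, xstar⟫ ≤ f x + ⟪A μ, x⟫) ∧
    (∀ q : H, (∀ x : H, f q + ⟪A μ, q⟫ ≤ f x + ⟪A μ, x⟫) → q = xstar) ∧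
    f xstar + ⟪A μ, xstar⟫ = -∑' i, ν i ^ 2 / (2 * lam i) * ⟪μ, φ i⟫ ^ 2 ∧
    (⨆ x : H, (⟪-A μ, x⟫ - f x)) = ∑' i, ν i ^ 2 / (2 * lam i) * ⟪μ, φ i⟫ ^ 2 := by
  have hlam0 : ∀ i, 0 < lam i := fun i => lt_of_lt_of_le hσ (hlam i).1
  set m : ι → ℝ := fun i => ⟪μ, φ i⟫ with hm
  -- squared coordinates of any vector are summable, with sum ‖y‖²
  have hcoord : ∀ y : H, HasSum (fun i => (⟪y, φ i⟫ : ℝ) ^ 2) (‖y‖ ^ 2) := by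
    intro y
    have h := φ.hasSum_inner_mul_inner y y
    have h2 : ∀ i, (⟪y, φ i⟫ : ℝ) * ⟪φ i, y⟫ = ⟪y, φ i⟫ ^ 2 := fun i => by
      rw [real_inner_comm y (φ i), sq]
    rw [real_inner_self_eq_norm_sq] at h
    simpa only [h2] using h
  have hm2 : Summable fun i => m i ^ 2 := (hcoord μ).summable
  set b : ι → ℝ := fun i => ν i * m i with hb
  -- coordinates of A μ
  have hAcoord : ∀ j, (⟪A μ, φ j⟫ : ℝ) = b j := by
    intro j
    have hsb : Summable fun i => b i ^ 2 := by
      refine Summable.of_nonneg_of_le (fun i => sq_nonneg _) (fun i => ?_) (hm2.mul_left (ζ ^ 2))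
      rw [hb, mul_pow]
      have hb2 : ν i ^ 2 ≤ ζ ^ 2 := by nlinarith [(hν i).1, (hν i).2, hθ]
      exact mul_le_mul_of_nonneg_right hb2 (sq_nonneg (m i))
    have : A μ = ∑' i, b i • φ i := by
      rw [hA μ]
      congr 1; funext i; rw [smul_smul]
    rw [this, hilbert_inner_tsum_smul φ b hsb j]
  -- coordinates of xstar
  set cs : ι → ℝ := fun i => -(ν i / lam i * m i) with hcs
  have hcs2 : Summable fun i => (ν i / lam i * m i) ^ 2 := by
    refine Summable.of_nonneg_of_le (fun i => sq_nonneg _) (fun i => ?_)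
      (hm2.mul_left ((ζ / σ) ^ 2))
    rw [mul_pow]
    have h1 : 0 ≤ ν i / lam i := div_nonneg (le_of_lt (lt_of_lt_of_le hθ (hν i).1)) (hlam0 i).le
    have h2 : ν i / lam i ≤ ζ / σ :=
      div_le_div₀ (le_trans hθ.le (le_trans (hν i).1 (hν i).2)) (hν i).2 hσ (hlam i).1
    exact mul_le_mul_of_nonneg_right (by nlinarith) (sq_nonneg (m i))
  have hxscoord : ∀ j, (⟪xstar, φ j⟫ : ℝ) = cs j := by
    intro j
    rw [hxstar, inner_neg_left]
    have : (∑' i, (ν i / lam i) • (m i • φ i) : H) = ∑' i, (ν i / lam i * m i) • φ i := by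
      congr 1; funext i; rw [smul_smul]
    rw [this, hilbert_inner_tsum_smul φ _ hcs2 j]
  -- inner product with A μ as a series
  have hAinner : ∀ x : H, HasSum (fun i => b i * ⟪x, φ i⟫) (⟪A μ, x⟫ : ℝ) := by
    intro x
    have h := φ.hasSum_inner_mul_inner (A μ) x
    have h2 : ∀ i, (⟪A μ, φ i⟫ : ℝ) * ⟪φ i, x⟫ = b i * ⟪x, φ i⟫ := fun i => by
      rw [hAcoord i, real_inner_comm (φ i) x]
    simpa only [h2] using h
  -- f-series summability
  have hfsum : ∀ x : H, Summable fun i => lam i / 2 * (⟪x, φ i⟫ : ℝ) ^ 2 := by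
    intro x
    refine Summable.of_nonneg_of_le
      (fun i => mul_nonneg (by linarith [(hlam0 i)]) (sq_nonneg _)) (fun i => ?_)
      (((hcoord x).summable).mul_left (β / 2))
    have := (hlam i).2
    nlinarith [sq_nonneg (⟪x, φ i⟫ : ℝ)]
  -- the objective as a single series
  have hg : ∀ x : H, HasSum (fun i => lam i / 2 * (⟪x, φ i⟫ : ℝ) ^ 2 + b i * ⟪x, φ i⟫)
      (f x + ⟪A μ, x⟫) := by
    intro x
    rw [hf x]
    exact ((hfsum x).hasSum).add (hAinner x)
  -- key decomposition
  have key : ∀ x : H, f x + ⟪A μ, x⟫ =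
      (f xstar + ⟪A μ, xstar⟫) + ∑' i, lam i / 2 * (⟪x - xstar, φ i⟫ : ℝ) ^ 2 := by
    intro x
    have hq : ∀ i, lam i / 2 * (⟪x, φ i⟫ : ℝ) ^ 2 + b i * ⟪x, φ i⟫ =
        (lam i / 2 * (⟪xstar, φ i⟫ : ℝ) ^ 2 + b i * ⟪xstar, φ i⟫)
          + lam i / 2 * (⟪x - xstar, φ i⟫ : ℝ) ^ 2 := by
      intro i
      rw [inner_sub_left, hxscoord i, hcs, hb]
      have h0 : lam i ≠ 0 := (hlam0 i).ne'
      field_simp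
      ring
    have h1 := hg x
    rw [funext hq] at h1
    have h2 : HasSum (fun i => lam i / 2 * (⟪x - xstar, φ i⟫ : ℝ) ^ 2)
        (∑' i, lam i / 2 * (⟪x - xstar, φ i⟫ : ℝ) ^ 2) := (hfsum (x - xstar)).hasSum
    have h3 := (hg xstar).add h2
    exact h1.unique h3
  -- lower bound on the residual series
  have hres : ∀ y : H, σ / 2 * ‖y‖ ^ 2 ≤ ∑' i, lam i / 2 * (⟪y, φ i⟫ : ℝ) ^ 2 := by
    intro y
    have h1 : σ / 2 * ‖y‖ ^ 2 = ∑' i, σ / 2 * (⟪y, φ i⟫ : ℝ) ^ 2 := by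
      rw [← (hcoord y).tsum_eq, tsum_mul_left]
    rw [h1]
    refine Summable.tsum_le_tsum (fun i => ?_) (((hcoord y).summable).mul_left (σ / 2)) (hfsum y)
    nlinarith [sq_nonneg (⟪y, φ i⟫ : ℝ), (hlam i).1]
  have hresnn : ∀ y : H, 0 ≤ ∑' i, lam i / 2 * (⟪y, φ i⟫ : ℝ) ^ 2 := fun y =>
    le_trans (by positivity) (hres y)
  -- the minimum property
  have hmin : ∀ x : H, f xstar + ⟪A μ, xstar⟫ ≤ f x + ⟪A μ, x⟫ := by
    intro x
    rw [key x]
    linarith [hresnn (x - xstar)]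
  -- the value
  have hval : f xstar + ⟪A μ, xstar⟫ = -∑' i, ν i ^ 2 / (2 * lam i) * m i ^ 2 := by
    have h1 : ∀ i, lam i / 2 * (⟪xstar, φ i⟫ : ℝ) ^ 2 + b i * ⟪xstar, φ i⟫ =
        -(ν i ^ 2 / (2 * lam i) * m i ^ 2) := by
      intro i
      rw [hxscoord i, hcs, hb]
      have h0 : lam i ≠ 0 := (hlam0 i).ne'
      field_simp
      ring
    have h2 := hg xstar
    rw [funext h1] at h2
    rw [← h2.tsum_eq, tsum_neg]
  refine ⟨hmin, ?_, hval, ?_⟩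
  · intro q hq
    have h1 := hq xstar
    rw [key q] at h1
    have h2 := hres (q - xstar)
    have h3 : ‖q - xstar‖ ^ 2 ≤ 0 := by nlinarith
    have h4 : ‖q - xstar‖ = 0 := by nlinarith [sq_nonneg ‖q - xstar‖, norm_nonneg (q - xstar)]
    have := norm_eq_zero.mp h4
    rwa [sub_eq_zero] at this
  · have hub : ∀ x : H, (⟪-A μ, x⟫ : ℝ) - f x ≤ ∑' i, ν i ^ 2 / (2 * lam i) * m i ^ 2 := by
      intro x
      have := hmin x
      rw [hval] at this
      rw [inner_neg_left]
      linarith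
    refine le_antisymm (ciSup_le hub) ?_
    have hbdd : BddAbove (Set.range fun x : H => (⟪-A μ, x⟫ : ℝ) - f x) :=
      ⟨∑' i, ν i ^ 2 / (2 * lam i) * m i ^ 2, by rintro _ ⟨x, rfl⟩; exact hub x⟩
    have h5 := le_ciSup hbdd xstar
    have h6 : (⟪-A μ, xstar⟫ : ℝ) - f xstar = ∑' i, ν i ^ 2 / (2 * lam i) * m i ^ 2 := by
      rw [inner_neg_left]
      linarith [hval]
    linarith [h5, h6.symm.le]
end

section
/- Let H and K be real Hilbert spaces, let f : H → ℝ be Fréchet differentiable with gradient ∇f and satisfy, for all x, y ∈ H, f(x) ≥ f(y) + ⟨∇f(y), x - y⟩ + (σ/2)·‖x - y‖² and f(x) ≤ f(y) + ⟨∇f(y), x - y⟩ + (β/2)·‖x - y‖² with 0 < σ ≤ β, and let A : H →L K be a bounded linear operator with adjoint A*. Then for every μ ∈ K the function x ↦ ⟨-A*(μ), x⟩ - f(x) attains its supremum at a unique point x_μ ∈ H, and the function d(μ) := ⟨-A*(μ), x_μ⟩ - f(x_μ) is (‖A*‖²/σ)-smooth in the sense that for all μ, η ∈ K: d(η) ≤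 d(μ) + ⟨-A(x_μ), η - μ⟩ + (‖A*‖²/(2σ))·‖η - μ‖². -/
open RealInnerProductSpace

set_option maxHeartbeats 1000000 in
/-- If `f : H → ℝ` is σ-strongly convex and β-smooth (`0 < σ ≤ β`) with gradient `∇f`, and
`A : H →L K` is bounded linear with adjoint `A*`, then for every `μ` the function
`x ↦ ⟪-A* μ, x⟫ - f x` attains its supremum at a unique point `x_μ`, and the dual function
`d(μ) = ⟪-A* μ, x_μ⟫ - f x_μ` is `(‖A*‖²/σ)`-smooth:
`d η ≤ d μ + ⟪-A x_μ, η - μ⟫ + (‖A*‖²/(2σ)) ‖η - μ‖²`. -/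
theorem dual_smooth {H K : Type*}
    [NormedAddCommGroup H] [InnerProductSpace ℝ H] [CompleteSpace H]
    [NormedAddCommGroup K] [InnerProductSpace ℝ K] [CompleteSpace K]
    (σ β : ℝ) (hσ : 0 < σ) (hσβ : σ ≤ β)
    (f : H → ℝ) (f' : H → H) (hf : ∀ x, HasGradientAt f (f' x) x)
    (hstrong : ∀ x y : H, f x ≥ f y + ⟪f' y, x - y⟫ + σ / 2 * ‖x - y‖ ^ 2)
    (hsmooth : ∀ x y : H, f x ≤ f y + ⟪f' y, x - y⟫ + β / 2 * ‖x - y‖ ^ 2)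
    (A : H →L[ℝ] K) :
    ∃ X : K → H,
      (∀ μ : K,
        (∀ x : H, ⟪-(A.adjoint μ), x⟫ - f x ≤ ⟪-(A.adjoint μ), X μ⟫ - f (X μ)) ∧
        (∀ x : H,
          (∀ x' : H, ⟪-(A.adjoint μ), x'⟫ - f x' ≤ ⟪-(A.adjoint μ), x⟫ - f x) → x = X μ)) ∧
      (∀ μ η : K,
        ⟪-(A.adjoint η), X η⟫ - f (X η) ≤
          (⟪-(A.adjoint μ), X μ⟫ - f (X μ)) + ⟪-(A (X μ)), η - μ⟫ +
            ‖A.adjoint‖ ^ 2 / (2 * σ) * ‖η - μ‖ ^ 2) := by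
  have hβ : 0 < β := hσ.trans_le hσβ
  set t : ℝ := β⁻¹ with htdef
  have ht : β * t = 1 := mul_inv_cancel₀ hβ.ne'
  have ht0 : 0 < t := inv_pos.mpr hβ
  -- strong monotonicity of the gradient
  have mono : ∀ x y : H, σ * ‖x - y‖ ^ 2 ≤ ⟪f' x - f' y, x - y⟫ := by
    intro x y
    have h1 := hstrong x y
    have h2 := hstrong y x
    have e : ⟪f' x, y - x⟫ = -⟪f' x, x - y⟫ := by
      rw [← inner_neg_right]; congr 1; abel
    have en : ‖y - x‖ = ‖x - y‖ := norm_sub_rev y x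
    rw [inner_sub_left]
    rw [e, en] at h2
    linarith
  -- co-coercivity (one-sided)
  have coco1 : ∀ x y : H, f x + ⟪f' x, y - x⟫ + t / 2 * ‖f' y - f' x‖ ^ 2 ≤ f y := by
    intro x y
    set w : H := f' y - f' x with hw
    set z : H := y - t • w with hz
    have hzy : z - y = -(t • w) := by rw [hz]; abel
    have hzx : z - x = (y - x) - t • w := by rw [hz]; abel
    have e1 : ⟪f' y, z - y⟫ = -(t * ⟪f' y, w⟫) := by
      rw [hzy, inner_neg_right, real_inner_smul_right]
    have e2 : ‖z - y‖ ^ 2 = t ^ 2 * ‖w‖ ^ 2 := by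
      rw [hzy, norm_neg, norm_smul, mul_pow, Real.norm_eq_abs, sq_abs]
    have e3 : ⟪f' x, z - x⟫ = ⟪f' x, y - x⟫ - t * ⟪f' x, w⟫ := by
      rw [hzx, inner_sub_right, real_inner_smul_right]
    have e4 : ⟪f' y, w⟫ - ⟪f' x, w⟫ = ‖w‖ ^ 2 := by
      rw [← inner_sub_left, ← hw, real_inner_self_eq_norm_sq]
    have e6 : t * ⟪f' y, w⟫ - t * ⟪f' x, w⟫ = t * ‖w‖ ^ 2 := by
      linear_combination t * e4
    have hA := hstrong z x
    have hB := hsmooth z y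
    rw [e1, e2] at hB
    rw [e3] at hA
    have e5 : β / 2 * (t ^ 2 * ‖w‖ ^ 2) = t / 2 * ‖w‖ ^ 2 := by
      linear_combination (t * ‖w‖ ^ 2 / 2) * ht
    have hσz : 0 ≤ σ / 2 * ‖z - x‖ ^ 2 := by positivity
    linarith
  -- co-coercivity
  have coco : ∀ x y : H, t * ‖f' x - f' y‖ ^ 2 ≤ ⟪f' x - f' y, x - y⟫ := by
    intro x y
    have h1 := coco1 x y
    have h2 := coco1 y x
    have en : ‖f' x - f' y‖ = ‖f' y - f' x‖ := norm_sub_rev _ _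
    have e : ⟪f' x, y - x⟫ = -⟪f' x, x - y⟫ := by
      rw [← inner_neg_right]; congr 1; abel
    rw [inner_sub_left, en]
    rw [e] at h1
    rw [show ⟪f' y, x - y⟫ = -⟪f' y, y - x⟫ from by rw [← inner_neg_right]; congr 1; abel] at h2
    have e7 : ⟪f' y, y - x⟫ = ⟪f' y, y - x⟫ := rfl
    -- h1: f x - ⟪f' x, x-y⟫ + t/2 ‖w‖² ≤ f y ; h2 : f y - ⟪f' y, y-x⟫ + t/2 ‖w‖² ≤ f x
    have e8 : ⟪f' y, y - x⟫ = -⟪f' y, x - y⟫ := by rw [← inner_neg_right]; congr 1; abel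
    rw [e8, en] at h2
    linarith
  -- solvability of the gradient equation via Banach fixed point
  have exis : ∀ b : H, ∃ x : H, f' x = b := by
    intro b
    set T : H → H := fun x => x - t • (f' x - b) with hT
    have hc2 : 0 ≤ 1 - σ / β := by
      rw [sub_nonneg, div_le_one hβ]; exact hσβ
    set c : ℝ := Real.sqrt (1 - σ / β) with hcdef
    have hc0 : 0 ≤ c := Real.sqrt_nonneg _
    have hc1 : c < 1 := by
      nlinarith [Real.sq_sqrt hc2, div_pos hσ hβ]
    have key : ∀ x y : H, ‖T x - T y‖ ^ 2 ≤ (1 - σ / β) * ‖x - y‖ ^ 2 := by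
      intro x y
      have hTxy : T x - T y = (x - y) - t • (f' x - f' y) := by
        simp only [hT, smul_sub]; abel
      rw [hTxy, norm_sub_sq_real, real_inner_smul_right, norm_smul, mul_pow,
        Real.norm_eq_abs, sq_abs]
      have hm := mono x y
      have hco := coco x y
      have hcomm : ⟪x - y, f' x - f' y⟫ = ⟪f' x - f' y, x - y⟫ := real_inner_comm _ _
      rw [hcomm]
      have hq : σ / β = σ * t := by rw [div_eq_mul_inv]
      nlinarith [mul_le_mul_of_nonneg_left hco ht0.le, sq_nonneg t]
    have hlip : LipschitzWith ⟨c, hc0⟩ T := by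
      apply LipschitzWith.of_dist_le_mul
      intro x y
      rw [dist_eq_norm, dist_eq_norm]
      have h := key x y
      have h2 : ‖T x - T y‖ ≤ Real.sqrt ((1 - σ / β) * ‖x - y‖ ^ 2) := by
        rw [← Real.sqrt_sq (norm_nonneg (T x - T y))]
        exact Real.sqrt_le_sqrt h
      calc ‖T x - T y‖ ≤ Real.sqrt ((1 - σ / β) * ‖x - y‖ ^ 2) := h2
        _ = c * ‖x - y‖ := by
            rw [Real.sqrt_mul hc2, Real.sqrt_sq (norm_nonneg _)]
    have hcon : ContractingWith ⟨c, hc0⟩ T := ⟨by exact_mod_cast hc1, hlip⟩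
    obtain hx := hcon.fixedPoint_isFixedPt
    refine ⟨hcon.fixedPoint T, ?_⟩
    have hx' : T (hcon.fixedPoint T) = hcon.fixedPoint T := hx
    have : t • (f' (hcon.fixedPoint T) - b) = 0 := by
      have := hx'
      simp only [hT] at this
      linear_combination (norm := module) -this
    have h0 : f' (hcon.fixedPoint T) - b = 0 := by
      rcases smul_eq_zero.mp this with h | h
      · exact absurd h ht0.ne'
      · exact h
    exact sub_eq_zero.mp h0
  choose X hX using fun μ : K => exis (-(A.adjoint μ))
  -- strict maximality
  have maxi : ∀ (μ : K) (x : H),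
      ⟪-(A.adjoint μ), x⟫ - f x ≤
        ⟪-(A.adjoint μ), X μ⟫ - f (X μ) - σ / 2 * ‖x - X μ‖ ^ 2 := by
    intro μ x
    have h := hstrong x (X μ)
    rw [hX μ] at h
    have e : ⟪-(A.adjoint μ), x - X μ⟫ = ⟪-(A.adjoint μ), x⟫ - ⟪-(A.adjoint μ), X μ⟫ :=
      inner_sub_right _ _ _
    linarith [h, e.symm.le, e.le]
  refine ⟨X, fun μ => ⟨fun x => ?_, fun x hx => ?_⟩, fun μ η => ?_⟩
  · have := maxi μ x
    nlinarith [sq_nonneg ‖x - X μ‖]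
  · have h1 := hx (X μ)
    have h2 := maxi μ x
    have h3 : ‖x - X μ‖ ^ 2 ≤ 0 := by nlinarith
    have h4 : ‖x - X μ‖ ^ 2 = 0 := le_antisymm h3 (sq_nonneg _)
    have h5 : x - X μ = 0 := by
      rwa [pow_eq_zero_iff (by norm_num : 2 ≠ 0), norm_eq_zero] at h4
    exact sub_eq_zero.mp h5
  · -- smoothness of the dual
    have h := hstrong (X η) (X μ)
    rw [hX μ] at h
    set r : ℝ := ‖X η - X μ‖ with hr
    set b1 : H := -(A.adjoint μ) with hb1
    set b2 : H := -(A.adjoint η) with hb2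
    have e1 : ⟪b1, X η - X μ⟫ = ⟪b1, X η⟫ - ⟪b1, X μ⟫ := inner_sub_right _ _ _
    have e2 : ⟪b2, X η⟫ - ⟪b1, X η - X μ⟫ =
        ⟪b1, X μ⟫ + ⟪b2 - b1, X η - X μ⟫ + ⟪b2 - b1, X μ⟫ := by
      simp only [inner_sub_left, inner_sub_right]
      ring
    have e3 : b2 - b1 = A.adjoint (μ - η) := by
      rw [hb1, hb2, map_sub]; abel
    have e4 : ⟪b2 - b1, X μ⟫ = ⟪-(A (X μ)), η - μ⟫ := by
      rw [e3, ContinuousLinearMap.adjoint_inner_left, inner_neg_left, real_inner_comm,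
        ← inner_neg_right]
      congr 1
      abel
    have e5 : ⟪b2 - b1, X η - X μ⟫ ≤ ‖A.adjoint‖ * ‖η - μ‖ * r := by
      rw [e3]
      calc ⟪A.adjoint (μ - η), X η - X μ⟫ ≤ ‖A.adjoint (μ - η)‖ * ‖X η - X μ‖ :=
            real_inner_le_norm _ _
        _ ≤ (‖A.adjoint‖ * ‖μ - η‖) * r :=
            mul_le_mul_of_nonneg_right (A.adjoint.le_opNorm _) (norm_nonneg _)
        _ = ‖A.adjoint‖ * ‖η - μ‖ * r := by rw [norm_sub_rev]
    have hr0 : 0 ≤ r := norm_nonneg _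
    have hcs : 0 ≤ ‖A.adjoint‖ * ‖η - μ‖ := by positivity
    have quad : ‖A.adjoint‖ * ‖η - μ‖ * r - σ / 2 * r ^ 2 ≤
        ‖A.adjoint‖ ^ 2 / (2 * σ) * ‖η - μ‖ ^ 2 := by
      rw [show ‖A.adjoint‖ ^ 2 / (2 * σ) * ‖η - μ‖ ^ 2 =
          ‖A.adjoint‖ ^ 2 * ‖η - μ‖ ^ 2 / (2 * σ) from by ring,
        le_div_iff₀ (by linarith : (0:ℝ) < 2 * σ)]
      nlinarith [sq_nonneg (‖A.adjoint‖ * ‖η - μ‖ - σ * r)]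
    linarith [h, e2, e4.le, e4.ge, e5, quad]
end

section
/- Let H and K be real Hilbert spaces, let f : H → ℝ be Fréchet differentiable with gradient ∇f and satisfy, for all x, y ∈ H, f(x) ≥ f(y) + ⟨∇f(y), x - y⟩ + (σ/2)·‖x - y‖² and f(x) ≤ f(y) + ⟨∇f(y), x - y⟩ + (β/2)·‖x - y‖² with 0 < σ ≤ β, and let A : H →L K be a bounded linear operator with adjoint A* satisfying ‖A*(μ)‖ ≥ θ·‖μ‖ for all μ ∈ K, for some θ > 0. Then for every μ ∈ K the function x ↦ ⟨-A*(μ), x⟩ - f(x) attains its supremum at a unique point x_μ ∈ H, and the function d(μ) := ⟨-A*(μ), x_μ⟩ - f(x_μ) is (θ²/β)-strongly convex in the sense that for all μ, η ∈ K: d(η) ≥ d(μ) + ⟨-A(x_μ), η - μ⟩ + (θ²/(2β))·‖η - μ‖². -/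
open RealInnerProductSpace

section Aux

variable {H : Type*} [NormedAddCommGroup H] [InnerProductSpace ℝ H] [CompleteSpace H]

/-- Descent lemma / cocoercivity preliminary. -/
theorem aux_coco (σ β : ℝ) (hσ : 0 < σ) (hσβ : σ ≤ β)
    (f : H → ℝ) (f' : H → H)
    (hstrong : ∀ x y : H, f x ≥ f y + ⟪f' y, x - y⟫ + σ / 2 * ‖x - y‖ ^ 2)
    (hsmooth : ∀ x y : H, f x ≤ f y + ⟪f' y, x - y⟫ + β / 2 * ‖x - y‖ ^ 2)
    (x y : H) : (1 / β) * ‖f' x - f' y‖ ^ 2 ≤ ⟪f' x - f' y, x - y⟫ := by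
  have hβ : 0 < β := lt_of_lt_of_le hσ hσβ
  have key : ∀ a b : H, f a + ⟪f' a, b - a⟫ + 1 / (2 * β) * ‖f' b - f' a‖ ^ 2 ≤ f b := by
    intro a b
    set g := f' b - f' a with hg
    set z := b - β⁻¹ • g with hz
    have h1 : f z ≥ f a + ⟪f' a, z - a⟫ := by
      have := hstrong z a
      nlinarith [sq_nonneg ‖z - a‖]
    have h2 : f z ≤ f b + ⟪f' b, z - b⟫ + β / 2 * ‖z - b‖ ^ 2 := hsmooth z b
    have hzb : z - b = -(β⁻¹ • g) := by rw [hz]; abel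
    have hnzb : ‖z - b‖ ^ 2 = β⁻¹ ^ 2 * ‖g‖ ^ 2 := by
      rw [hzb, norm_neg, norm_smul, Real.norm_eq_abs, abs_of_pos (inv_pos.mpr hβ), mul_pow]
    have hib : ⟪f' b, z - b⟫ = -(β⁻¹ * ⟪f' b, g⟫) := by
      rw [hzb, inner_neg_right, real_inner_smul_right]
    have hza : z - a = (b - a) - β⁻¹ • g := by rw [hz]; abel
    have hia : ⟪f' a, z - a⟫ = ⟪f' a, b - a⟫ - β⁻¹ * ⟪f' a, g⟫ := by
      rw [hza, inner_sub_right, real_inner_smul_right]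
    have hgg : ⟪f' b, g⟫ - ⟪f' a, g⟫ = ‖g‖ ^ 2 := by
      rw [← inner_sub_left, ← hg, real_inner_self_eq_norm_sq]
    have hβ' : β⁻¹ = 1 / β := (one_div β).symm
    rw [hia] at h1
    rw [hib, hnzb] at h2
    have hm : β⁻¹ * ⟪f' b, g⟫ - β⁻¹ * ⟪f' a, g⟫ = β⁻¹ * ‖g‖ ^ 2 := by
      rw [← mul_sub, hgg]
    have hb2' : 1 / (2 * β) * ‖g‖ ^ 2 = β⁻¹ * ‖g‖ ^ 2 - β / 2 * (β⁻¹ ^ 2 * ‖g‖ ^ 2) := by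
      field_simp; ring
    linarith [h1, h2, hm, hb2']
  have k1 := key x y
  have k2 := key y x
  have e1 : ⟪f' x, y - x⟫ = -⟪f' x, x - y⟫ := by rw [← inner_neg_right, neg_sub]
  have e2 : ‖f' y - f' x‖ = ‖f' x - f' y‖ := norm_sub_rev _ _
  have e3 : ⟪f' x - f' y, x - y⟫ = ⟪f' x, x - y⟫ - ⟪f' y, x - y⟫ := inner_sub_left _ _ _
  have hb : (1 : ℝ) / β * ‖f' x - f' y‖ ^ 2 =
      1 / (2 * β) * ‖f' x - f' y‖ ^ 2 + 1 / (2 * β) * ‖f' x - f' y‖ ^ 2 := by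
    field_simp; ring
  rw [e2] at k1
  linarith [k1, k2, e1.le, e1.ge, e3.le, e3.ge, hb.le, hb.ge]

/-- Strong monotonicity of the gradient. -/
theorem aux_mono (σ : ℝ)
    (f : H → ℝ) (f' : H → H)
    (hstrong : ∀ x y : H, f x ≥ f y + ⟪f' y, x - y⟫ + σ / 2 * ‖x - y‖ ^ 2)
    (x y : H) : σ * ‖x - y‖ ^ 2 ≤ ⟪f' x - f' y, x - y⟫ := by
  have h1 := hstrong x y
  have h2 := hstrong y x
  have e1 : ⟪f' x, y - x⟫ = -⟪f' x, x - y⟫ := by rw [← inner_neg_right, neg_sub]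
  have e2 : ‖y - x‖ = ‖x - y‖ := norm_sub_rev _ _
  have e3 : ⟪f' x - f' y, x - y⟫ = ⟪f' x, x - y⟫ - ⟪f' y, x - y⟫ := inner_sub_left _ _ _
  rw [e2, e1] at h2
  nlinarith [h1, h2]

/-- The gradient map of a strongly convex smooth function is surjective. -/
theorem aux_surj (σ β : ℝ) (hσ : 0 < σ) (hσβ : σ ≤ β)
    (f : H → ℝ) (f' : H → H)
    (hstrong : ∀ x y : H, f x ≥ f y + ⟪f' y, x - y⟫ + σ / 2 * ‖x - y‖ ^ 2)
    (hsmooth : ∀ x y : H, f x ≤ f y + ⟪f' y, x - y⟫ + β / 2 * ‖x - y‖ ^ 2)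
    (c : H) : ∃ x : H, f' x = c := by
  have hβ : 0 < β := lt_of_lt_of_le hσ hσβ
  set T : H → H := fun x => x - β⁻¹ • (f' x - c) with hT
  have hk0 : (0:ℝ) ≤ 1 - σ / β := by
    have : σ / β ≤ 1 := (div_le_one hβ).mpr hσβ
    linarith
  set k : ℝ := Real.sqrt (1 - σ / β) with hk
  have hknn : 0 ≤ k := Real.sqrt_nonneg _
  have hksq : k ^ 2 = 1 - σ / β := Real.sq_sqrt hk0
  have hk1 : k < 1 := by
    rw [hk]
    have h1 : 1 - σ / β < 1 := by
      have : 0 < σ / β := div_pos hσ hβ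
      linarith
    calc Real.sqrt (1 - σ / β) < Real.sqrt 1 := by
          apply Real.sqrt_lt_sqrt hk0 h1
      _ = 1 := Real.sqrt_one
  have hlip : ∀ x y : H, ‖T x - T y‖ ≤ k * ‖x - y‖ := by
    intro x y
    set g := f' x - f' y with hg
    have hTxy : T x - T y = (x - y) - β⁻¹ • g := by
      simp only [hT, hg, smul_sub]; abel
    have hsq : ‖T x - T y‖ ^ 2 = ‖x - y‖ ^ 2 - 2 * β⁻¹ * ⟪g, x - y⟫ + β⁻¹ ^ 2 * ‖g‖ ^ 2 := by
      rw [hTxy, norm_sub_sq_real, real_inner_smul_right, norm_smul, Real.norm_eq_abs,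
        abs_of_pos (inv_pos.mpr hβ), mul_pow, real_inner_comm]
      ring
    have hco := aux_coco σ β hσ hσβ f f' hstrong hsmooth x y
    have hmo := aux_mono σ f f' hstrong x y
    have hbound : ‖T x - T y‖ ^ 2 ≤ (k * ‖x - y‖) ^ 2 := by
      have hβi : β⁻¹ = 1 / β := (one_div β).symm
      rw [mul_pow, hksq]
      rw [hsq]
      have : 2 * β⁻¹ * ⟪g, x - y⟫ ≥ β⁻¹ * (σ * ‖x - y‖^2) + β⁻¹ * ((1/β) * ‖g‖^2) := by
        have hβi' : (0:ℝ) < β⁻¹ := inv_pos.mpr hβ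
        nlinarith [hco, hmo]
      have hb2 : β⁻¹ * (1/β) = β⁻¹ ^ 2 := by field_simp
      have hd : (1 - σ / β) = 1 - β⁻¹ * σ := by field_simp
      nlinarith [this]
    calc ‖T x - T y‖ = Real.sqrt (‖T x - T y‖ ^ 2) := (Real.sqrt_sq (norm_nonneg _)).symm
      _ ≤ Real.sqrt ((k * ‖x - y‖) ^ 2) := Real.sqrt_le_sqrt hbound
      _ = k * ‖x - y‖ := Real.sqrt_sq (by positivity)
  have hcontr : ContractingWith ⟨k, hknn⟩ T := by
    constructor
    · exact_mod_cast hk1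
    · apply LipschitzWith.of_dist_le_mul
      intro x y
      rw [dist_eq_norm, dist_eq_norm]
      exact hlip x y
  have hfix := hcontr.efixedPoint_isFixedPt (x := 0) (hx := edist_ne_top 0 (T 0))
  set x₀ := ContractingWith.efixedPoint T hcontr 0 (edist_ne_top 0 (T 0)) with hx₀
  refine ⟨x₀, ?_⟩
  have : x₀ - β⁻¹ • (f' x₀ - c) = x₀ := hfix
  have h0 : β⁻¹ • (f' x₀ - c) = 0 := by
    have := sub_eq_iff_eq_add.mp this
    linear_combination (norm := abel) -this
  have := smul_eq_zero.mp h0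
  rcases this with h | h
  · exact absurd h (by positivity)
  · exact sub_eq_zero.mp h

end Aux

set_option maxHeartbeats 1000000 in
/-- If `f : H → ℝ` is σ-strongly convex and β-smooth (`0 < σ ≤ β`) with gradient `∇f`, and
`A : H →L K` is bounded linear with adjoint `A*` satisfying `‖A* μ‖ ≥ θ‖μ‖` for all `μ`
(`θ > 0`), then for every `μ` the function `x ↦ ⟪-A* μ, x⟫ - f x` attains its supremum at a
unique point `x_μ`, and the dual function `d(μ) = ⟪-A* μ, x_μ⟫ - f x_μ` is
`(θ²/β)`-strongly convex: `d η ≥ d μ + ⟪-A x_μ, η - μ⟫ + (θ²/(2β)) ‖η - μ‖²`. -/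
theorem dual_strongly_convex {H K : Type*}
    [NormedAddCommGroup H] [InnerProductSpace ℝ H] [CompleteSpace H]
    [NormedAddCommGroup K] [InnerProductSpace ℝ K] [CompleteSpace K]
    (σ β θ : ℝ) (hσ : 0 < σ) (hσβ : σ ≤ β) (hθ : 0 < θ)
    (f : H → ℝ) (f' : H → H) (hf : ∀ x, HasGradientAt f (f' x) x)
    (hstrong : ∀ x y : H, f x ≥ f y + ⟪f' y, x - y⟫ + σ / 2 * ‖x - y‖ ^ 2)
    (hsmooth : ∀ x y : H, f x ≤ f y + ⟪f' y, x - y⟫ + β / 2 * ‖x - y‖ ^ 2)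
    (A : H →L[ℝ] K) (hA : ∀ μ : K, θ * ‖μ‖ ≤ ‖A.adjoint μ‖) :
    ∃ X : K → H,
      (∀ μ : K,
        (∀ x : H, ⟪-(A.adjoint μ), x⟫ - f x ≤ ⟪-(A.adjoint μ), X μ⟫ - f (X μ)) ∧
        (∀ x : H,
          (∀ x' : H, ⟪-(A.adjoint μ), x'⟫ - f x' ≤ ⟪-(A.adjoint μ), x⟫ - f x) → x = X μ)) ∧
      (∀ μ η : K,
        ⟪-(A.adjoint η), X η⟫ - f (X η) ≥
          (⟪-(A.adjoint μ), X μ⟫ - f (X μ)) + ⟪-(A (X μ)), η - μ⟫ +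
            θ ^ 2 / (2 * β) * ‖η - μ‖ ^ 2) := by
  have hβ : 0 < β := lt_of_lt_of_le hσ hσβ
  have hsurj : ∀ c : H, ∃ x : H, f' x = c :=
    aux_surj σ β hσ hσβ f f' hstrong hsmooth
  set X : K → H := fun μ => Classical.choose (hsurj (-(A.adjoint μ))) with hX
  have hXg : ∀ μ : K, f' (X μ) = -(A.adjoint μ) := fun μ =>
    Classical.choose_spec (hsurj (-(A.adjoint μ)))
  -- strict maximality
  have hmax : ∀ (μ : K) (x : H),
      ⟪-(A.adjoint μ), x⟫ - f x + σ / 2 * ‖x - X μ‖ ^ 2 ≤ ⟪-(A.adjoint μ), X μ⟫ - f (X μ) := by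
    intro μ x
    have := hstrong x (X μ)
    rw [hXg μ] at this
    have e : ⟪-(A.adjoint μ), x - X μ⟫ = ⟪-(A.adjoint μ), x⟫ - ⟪-(A.adjoint μ), X μ⟫ :=
      inner_sub_right _ _ _
    linarith [this, e.ge, e.le]
  refine ⟨X, fun μ => ⟨fun x => ?_, fun x hx => ?_⟩, ?_⟩
  · have := hmax μ x
    nlinarith [sq_nonneg ‖x - X μ‖]
  · -- uniqueness
    have h1 := hx (X μ)
    have h2 := hmax μ x
    have : σ / 2 * ‖x - X μ‖ ^ 2 ≤ 0 := by linarith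
    have hn : ‖x - X μ‖ ^ 2 ≤ 0 := by nlinarith
    have : ‖x - X μ‖ = 0 := by nlinarith [sq_nonneg ‖x - X μ‖, norm_nonneg (x - X μ)]
    have := norm_eq_zero.mp this
    exact sub_eq_zero.mp this
  · intro μ η
    set cμ := -(A.adjoint μ) with hcμ
    set cη := -(A.adjoint η) with hcη
    set v := cη - cμ with hv
    set z := X μ + β⁻¹ • v with hz
    -- d η ≥ ⟪cη, z⟫ - f z
    have h1 : ⟪cη, z⟫ - f z ≤ ⟪cη, X η⟫ - f (X η) := by
      have := hmax η z
      nlinarith [sq_nonneg ‖z - X η‖]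
    -- smoothness at X μ
    have h2 : f z ≤ f (X μ) + ⟪cμ, z - X μ⟫ + β / 2 * ‖z - X μ‖ ^ 2 := by
      have := hsmooth z (X μ)
      rwa [hXg μ] at this
    have hzXμ : z - X μ = β⁻¹ • v := by rw [hz]; abel
    have hnz : ‖z - X μ‖ ^ 2 = β⁻¹ ^ 2 * ‖v‖ ^ 2 := by
      rw [hzXμ, norm_smul, Real.norm_eq_abs, abs_of_pos (inv_pos.mpr hβ), mul_pow]
    have hiμ : ⟪cμ, z - X μ⟫ = β⁻¹ * ⟪cμ, v⟫ := by
      rw [hzXμ, real_inner_smul_right]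
    have hiz : ⟪cη, z⟫ = ⟪cη, X μ⟫ + β⁻¹ * ⟪cη, v⟫ := by
      rw [hz, inner_add_right, real_inner_smul_right]
    have hvv : ⟪cη, v⟫ - ⟪cμ, v⟫ = ‖v‖ ^ 2 := by
      rw [← inner_sub_left, ← hv, real_inner_self_eq_norm_sq]
    -- gradient term
    have hgrad : ⟪cη, X μ⟫ - ⟪cμ, X μ⟫ = ⟪-(A (X μ)), η - μ⟫ := by
      rw [← inner_sub_left]
      have : cη - cμ = -(A.adjoint (η - μ)) := by
        rw [hcη, hcμ, map_sub]; abel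
      rw [this, inner_neg_left, inner_neg_left, ContinuousLinearMap.adjoint_inner_left,
        real_inner_comm]
    -- norm bound
    have hvbd : θ ^ 2 * ‖η - μ‖ ^ 2 ≤ ‖v‖ ^ 2 := by
      have : v = -(A.adjoint (η - μ)) := by rw [hv, hcη, hcμ, map_sub]; abel
      rw [this, norm_neg]
      have h := hA (η - μ)
      have h0 : (0:ℝ) ≤ θ * ‖η - μ‖ := by positivity
      nlinarith [mul_self_le_mul_self h0 h]
    have hslack : θ ^ 2 / (2 * β) * ‖η - μ‖ ^ 2 ≤ β⁻¹ * ‖v‖ ^ 2 - β / 2 * (β⁻¹ ^ 2 * ‖v‖ ^ 2) := by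
      have e : β⁻¹ * ‖v‖ ^ 2 - β / 2 * (β⁻¹ ^ 2 * ‖v‖ ^ 2) = ‖v‖ ^ 2 / (2 * β) := by
        field_simp; ring
      have e2 : θ ^ 2 / (2 * β) * ‖η - μ‖ ^ 2 = (θ ^ 2 * ‖η - μ‖ ^ 2) / (2 * β) := by ring
      have h2β : (0:ℝ) < 2 * β := by linarith
      rw [e, e2]
      exact (div_le_div_iff_of_pos_right h2β).mpr hvbd
    have hvv' : β⁻¹ * ⟪cη, v⟫ - β⁻¹ * ⟪cμ, v⟫ = β⁻¹ * ‖v‖ ^ 2 := by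
      rw [← mul_sub, hvv]
    rw [hnz, hiμ] at h2
    rw [hiz] at h1
    linarith [h1, h2, hgrad.le, hgrad.ge, hslack, hvv'.le, hvv'.ge]
end
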